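/- arXiv:0910.4573 — 2 statements merged into one kernel-verified Lean document; each statement's English description precedes it below -/
import Mathlib

section
/- Let a_n denote the number of column-convex hexagonal-celled polyominoes with area n (counted up to translation, with a_0 = 0). Then in the ring of formal power series ℚ⟦q⟧ one has the identity (1 − 6q + 10q² − 7q³ + q⁴) · (∑_{n≥0} a_n qⁿ) = q − 3q² + 3q³ − q⁴, i.e. the area generating function of column-convex polyominoes equals q(1−q)³ / (1 − 6q + 10q² − 7q³ + q⁴). -/
open Finset Filter

noncomputable section

/-- A cell of the hexagonal lattice, modelled as a point of ℤ². -/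
abbrev Cell : Type := ℤ × ℤ

/-- Hexagonal adjacency on ℤ². -/
def HexAdj (a b : Cell) : Prop :=
  (b.1 - a.1, b.2 - a.2) ∈
    ({(1,0), (-1,0), (0,1), (0,-1), (1,1), (-1,-1)} : Set (ℤ × ℤ))

/-- A (hexagonal-celled) polyomino: a finite nonempty set of cells,
connected under hexagonal adjacency. -/
def IsPolyomino (P : Finset Cell) : Prop :=
  P.Nonempty ∧ ∀ a ∈ P, ∀ b ∈ P,
    Relation.ReflTransGen (fun u v : Cell => u ∈ P ∧ v ∈ P ∧ HexAdj u v) a b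

/-- The canonical representative of a translation class: both the minimal
abscissa and the minimal ordinate are `0`. -/
def Normalized (P : Finset Cell) : Prop :=
  (∀ c ∈ P, 0 ≤ c.1 ∧ 0 ≤ c.2) ∧ (∃ c ∈ P, c.1 = 0) ∧ (∃ c ∈ P, c.2 = 0)

/-- Ordinates of the cells of the column of `P` at abscissa `x`. -/
def columnYs (P : Finset Cell) (x : ℤ) : Finset ℤ :=
  (P.filter (fun c => c.1 = x)).image Prod.snd

/-- Number of connected components (maximal runs of consecutive integers) of a
finite set of integers: each component is counted via its least element. -/
def numComponents (s : Finset ℤ) : ℕ := (s.filter (fun a => a - 1 ∉ s)).card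

/-- Every nonempty column has exactly one connected component. -/
def ColumnConvex (P : Finset Cell) : Prop :=
  ∀ x : ℤ, (columnYs P x).Nonempty → numComponents (columnYs P x) = 1

/-- `a` and `b` lie in the same connected component of `s`. -/
def SameComp (s : Finset ℤ) (a b : ℤ) : Prop :=
  a ∈ s ∧ b ∈ s ∧ ∀ c : ℤ, min a b ≤ c → c ≤ max a b → c ∈ s

/-- The leftmost nonempty column has exactly one connected component and, for
every pair of nonempty columns at consecutive abscissas `x`, `x+1`, every
connected component of the column at `x+1` contains a cell adjacent to some
cell of the column at `x`. -/
def RightwardSemiDirected (P : Finset Cell) : Prop :=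
  (∀ x : ℤ, (columnYs P x).Nonempty → (∀ x' : ℤ, x' < x → columnYs P x' = ∅) →
      numComponents (columnYs P x) = 1) ∧
  (∀ x : ℤ, (columnYs P x).Nonempty → (columnYs P (x+1)).Nonempty →
      ∀ b ∈ columnYs P (x+1), ∃ b' ∈ columnYs P (x+1),
        SameComp (columnYs P (x+1)) b b' ∧
        ∃ c ∈ columnYs P x, HexAdj (x, c) (x+1, b'))

/-- The cells of the gap(s) of a column: the integers between the least and the
greatest element that do not belong to the column. -/
def gapCells (s : Finset ℤ) : Finset ℤ :=
  Finset.Icc (WithTop.untopD 0 s.min) (WithBot.unbotD 0 s.max) \ s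

def gapSize (s : Finset ℤ) : ℕ := (gapCells s).card

/-- Level `m` cheesy polyomino. -/
def IsCheesy (m : ℕ) (P : Finset Cell) : Prop :=
  IsPolyomino P ∧ RightwardSemiDirected P ∧
  ∀ x : ℤ, numComponents (columnYs P x) ≤ 2 ∧
    (numComponents (columnYs P x) = 2 → gapSize (columnYs P x) ≤ m)

/-- Height of a (nonempty) column: max − min + 1. -/
def heightN (s : Finset ℤ) : ℕ :=
  (WithBot.unbotD 0 s.max - WithTop.untopD 0 s.min + 1).toNat

/-- The maximal abscissa of a polyomino. -/
def maxX (P : Finset Cell) : ℤ := WithBot.unbotD 0 (P.image Prod.fst).max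

/-- The last column (ordinates of the column of maximal abscissa). -/
def lastCol (P : Finset Cell) : Finset ℤ := columnYs P (maxX P)

/-- Number of column-convex polyominoes with area `n`, counted up to translation. -/
def ccCount (n : ℕ) : ℕ :=
  Nat.card {P : Finset Cell // IsPolyomino P ∧ ColumnConvex P ∧ Normalized P ∧ P.card = n}

namespace CC

abbrev Adj (P : Finset Cell) (u v : Cell) : Prop := u ∈ P ∧ v ∈ P ∧ HexAdj u v
abbrev Conn (P : Finset Cell) (a b : Cell) : Prop := Relation.ReflTransGen (Adj P) a b

lemma hexAdj_cases {a b : Cell} (h : HexAdj a b) :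
    (b.1 = a.1 + 1 ∧ b.2 = a.2) ∨ (b.1 = a.1 - 1 ∧ b.2 = a.2) ∨
    (b.1 = a.1 ∧ b.2 = a.2 + 1) ∨ (b.1 = a.1 ∧ b.2 = a.2 - 1) ∨
    (b.1 = a.1 + 1 ∧ b.2 = a.2 + 1) ∨ (b.1 = a.1 - 1 ∧ b.2 = a.2 - 1) := by
  simp only [HexAdj, Set.mem_insert_iff, Set.mem_singleton_iff, Prod.mk.injEq] at h
  omega

lemma hexAdj_of_diff {a b : Cell}
    (h : (b.1 = a.1 + 1 ∧ b.2 = a.2) ∨ (b.1 = a.1 - 1 ∧ b.2 = a.2) ∨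
    (b.1 = a.1 ∧ b.2 = a.2 + 1) ∨ (b.1 = a.1 ∧ b.2 = a.2 - 1) ∨
    (b.1 = a.1 + 1 ∧ b.2 = a.2 + 1) ∨ (b.1 = a.1 - 1 ∧ b.2 = a.2 - 1)) : HexAdj a b := by
  simp only [HexAdj, Set.mem_insert_iff, Set.mem_singleton_iff, Prod.mk.injEq]
  omega

lemma hexAdj_symm {a b : Cell} (h : HexAdj a b) : HexAdj b a := by
  apply hexAdj_of_diff; rcases hexAdj_cases h with h|h|h|h|h|h <;> omega

lemma conn_symm {P : Finset Cell} {a b : Cell} (h : Conn P a b) : Conn P b a := by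
  induction h with
  | refl => exact .refl
  | tail _ hstep ih =>
    exact Relation.ReflTransGen.trans
      (Relation.ReflTransGen.single ⟨hstep.2.1, hstep.1, hexAdj_symm hstep.2.2⟩) ih

lemma conn_fst_ivt {P : Finset Cell} {a b : Cell} (h : Conn P a b) (ha : a ∈ P) :
    ∀ c : ℤ, a.1 ≤ c → c ≤ b.1 → ∃ p ∈ P, p.1 = c := by
  induction h with
  | refl => intro c h1 h2; exact ⟨a, ha, le_antisymm h1 h2⟩
  | @tail b d _ hstep ih =>
    intro c h1 h2
    rcases le_or_gt c b.1 with h3 | h3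
    · exact ih c h1 h3
    · refine ⟨d, hstep.2.1, le_antisymm ?_ h2⟩
      rcases hexAdj_cases hstep.2.2 with h|h|h|h|h|h <;> omega

lemma conn_snd_ivt {P : Finset Cell} {a b : Cell} (h : Conn P a b) (ha : a ∈ P) :
    ∀ c : ℤ, a.2 ≤ c → c ≤ b.2 → ∃ p ∈ P, p.2 = c := by
  induction h with
  | refl => intro c h1 h2; exact ⟨a, ha, le_antisymm h1 h2⟩
  | @tail b d _ hstep ih =>
    intro c h1 h2
    rcases le_or_gt c b.2 with h3 | h3
    · exact ih c h1 h3
    · refine ⟨d, hstep.2.1, le_antisymm ?_ h2⟩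
      rcases hexAdj_cases hstep.2.2 with h|h|h|h|h|h <;> omega

/-- intermediate value for the first coordinate, in a polyomino -/
lemma poly_fst_ivt {P : Finset Cell} (hP : IsPolyomino P) {a b : Cell}
    (ha : a ∈ P) (hb : b ∈ P) {c : ℤ} (h1 : a.1 ≤ c) (h2 : c ≤ b.1) :
    ∃ p ∈ P, p.1 = c :=
  conn_fst_ivt (hP.2 a ha b hb) ha c h1 h2

lemma poly_snd_ivt {P : Finset Cell} (hP : IsPolyomino P) {a b : Cell}
    (ha : a ∈ P) (hb : b ∈ P) {c : ℤ} (h1 : a.2 ≤ c) (h2 : c ≤ b.2) :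
    ∃ p ∈ P, p.2 = c :=
  conn_snd_ivt (hP.2 a ha b hb) ha c h1 h2

/-- crossing lemma: a connection passing the vertical line between `x` and `x+1`
produces an adjacent pair in the two columns. -/
lemma conn_cross {P : Finset Cell} {a b : Cell} (h : Conn P a b) (x : ℤ)
    (h1 : a.1 ≤ x) (h2 : x + 1 ≤ b.1) :
    ∃ u ∈ P, ∃ v ∈ P, u.1 = x ∧ v.1 = x + 1 ∧ (v.2 = u.2 ∨ v.2 = u.2 + 1) := by
  induction h with
  | refl => omega
  | @tail b d _ hstep ih =>
    rcases le_or_gt b.1 x with h3 | h3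
    · refine ⟨b, hstep.1, d, hstep.2.1, ?_⟩
      rcases hexAdj_cases hstep.2.2 with h|h|h|h|h|h <;> omega
    · exact ih h3

end CC
namespace CC

lemma mem_columnYs {P : Finset Cell} {x y : ℤ} : y ∈ columnYs P x ↔ (x, y) ∈ P := by
  simp only [columnYs, Finset.mem_image, Finset.mem_filter]
  constructor
  · rintro ⟨c, ⟨hc, hc1⟩, hc2⟩
    have : (x, y) = c := by ext <;> simp [hc1.symm, hc2.symm]
    rwa [this]
  · intro h; exact ⟨(x, y), ⟨h, rfl⟩, rfl⟩

lemma numComponents_Icc {a b : ℤ} (hab : a ≤ b) : numComponents (Finset.Icc a b) = 1 := by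
  unfold numComponents
  have : (Finset.Icc a b).filter (fun c => c - 1 ∉ Finset.Icc a b) = {a} := by
    ext c
    simp only [Finset.mem_filter, Finset.mem_Icc, Finset.mem_singleton]
    omega
  rw [this, Finset.card_singleton]

lemma eq_Icc_of_numComponents_one {s : Finset ℤ} (hs : s.Nonempty)
    (h : numComponents s = 1) : s = Finset.Icc (s.min' hs) (s.max' hs) := by
  by_contra hne
  have hsub : s ⊆ Finset.Icc (s.min' hs) (s.max' hs) := fun c hc =>
    Finset.mem_Icc.mpr ⟨Finset.min'_le s c hc, Finset.le_max' s c hc⟩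
  obtain ⟨g, hg1, hg2⟩ : ∃ g ∈ Finset.Icc (s.min' hs) (s.max' hs), g ∉ s := by
    by_contra hh
    push_neg at hh
    exact hne (Finset.Subset.antisymm hsub hh)
  rw [Finset.mem_Icc] at hg1
  have hT : (s.filter (fun c => g < c)).Nonempty := by
    refine ⟨s.max' hs, Finset.mem_filter.mpr ⟨Finset.max'_mem s hs, ?_⟩⟩
    rcases lt_or_eq_of_le hg1.2 with h' | h'
    · exact h'
    · exact absurd (h' ▸ Finset.max'_mem s hs) hg2
  set t := (s.filter (fun c => g < c)).min' hT with ht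
  have htmem : t ∈ s.filter (fun c => g < c) := Finset.min'_mem _ hT
  rw [Finset.mem_filter] at htmem
  have hts : t ∈ s := htmem.1
  have htg : g < t := htmem.2
  have ht1 : t - 1 ∉ s := by
    intro hmem
    rcases lt_or_eq_of_le (by omega : g ≤ t - 1) with h' | h'
    · have : t ≤ t - 1 := Finset.min'_le _ _ (Finset.mem_filter.mpr ⟨hmem, h'⟩)
      omega
    · exact hg2 (h' ▸ hmem)
  have hmin1 : s.min' hs - 1 ∉ s := fun hmem => by
    have := Finset.min'_le s _ hmem; omega
  have hpair : ({s.min' hs, t} : Finset ℤ) ⊆ s.filter (fun c => c - 1 ∉ s) := by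
    intro c hc
    rcases Finset.mem_insert.mp hc with rfl | hc
    · exact Finset.mem_filter.mpr ⟨Finset.min'_mem s hs, hmin1⟩
    · rw [Finset.mem_singleton] at hc
      exact hc ▸ Finset.mem_filter.mpr ⟨hts, ht1⟩
  have hne' : s.min' hs ≠ t := by
    have := hg1.1; omega
  have h2 : 2 ≤ (s.filter (fun c => c - 1 ∉ s)).card := by
    calc 2 = ({s.min' hs, t} : Finset ℤ).card := by
            rw [Finset.card_insert_of_notMem (by simpa using hne'), Finset.card_singleton]
      _ ≤ _ := Finset.card_le_card hpair
  rw [numComponents] at h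
  omega

/-- A nonempty column of a column-convex polyomino is an integer interval. -/
lemma column_eq_Icc {P : Finset Cell} (hcc : ColumnConvex P) {x : ℤ}
    (hx : (columnYs P x).Nonempty) :
    columnYs P x = Finset.Icc ((columnYs P x).min' hx) ((columnYs P x).max' hx) :=
  eq_Icc_of_numComponents_one hx (hcc x hx)

end CC
namespace CC

def Cond (n : ℕ) (P : Finset Cell) : Prop :=
  IsPolyomino P ∧ ColumnConvex P ∧ Normalized P ∧ P.card = n

lemma maxX_eq_of {P : Finset Cell} {M : ℤ} (h1 : ∀ c ∈ P, c.1 ≤ M)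
    (h2 : ∃ c ∈ P, c.1 = M) : maxX P = M := by
  obtain ⟨c, hc, hcM⟩ := h2
  have hne : (P.image Prod.fst).Nonempty := ⟨M, Finset.mem_image.mpr ⟨c, hc, hcM⟩⟩
  have hmax' : (P.image Prod.fst).max' hne = M := by
    refine le_antisymm (Finset.max'_le _ _ _ ?_) (Finset.le_max' _ _ ?_)
    · intro y hy
      obtain ⟨d, hd, rfl⟩ := Finset.mem_image.mp hy
      exact h1 d hd
    · exact Finset.mem_image.mpr ⟨c, hc, hcM⟩
  rw [maxX, ← Finset.coe_max' hne, hmax', WithBot.unbotD_coe]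

lemma fst_le_maxX {P : Finset Cell} {c : Cell} (hc : c ∈ P) : c.1 ≤ maxX P := by
  have hne : (P.image Prod.fst).Nonempty := ⟨c.1, Finset.mem_image.mpr ⟨c, hc, rfl⟩⟩
  rw [maxX, ← Finset.coe_max' hne, WithBot.unbotD_coe]
  exact Finset.le_max' _ _ (Finset.mem_image.mpr ⟨c, hc, rfl⟩)

lemma exists_fst_eq_maxX {P : Finset Cell} (hP : P.Nonempty) : ∃ c ∈ P, c.1 = maxX P := by
  have hne : (P.image Prod.fst).Nonempty := hP.image _
  obtain ⟨c, hc, hcm⟩ := Finset.mem_image.mp (Finset.max'_mem _ hne)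
  exact ⟨c, hc, by rw [maxX, ← Finset.coe_max' hne, WithBot.unbotD_coe, hcm]⟩

lemma maxX_nonneg {P : Finset Cell} (hN : Normalized P) (hP : P.Nonempty) :
    0 ≤ maxX P := by
  obtain ⟨c, hc⟩ := hP
  exact le_trans (hN.1 c hc).1 (fst_le_maxX hc)

lemma lastCol_nonempty {P : Finset Cell} (hP : P.Nonempty) : (lastCol P).Nonempty := by
  obtain ⟨c, hc, hcm⟩ := exists_fst_eq_maxX hP
  exact ⟨c.2, mem_columnYs.mpr (by rwa [← hcm, Prod.mk.eta])⟩

lemma columnYs_nonempty_iff {P : Finset Cell} (hP : IsPolyomino P) (hN : Normalized P)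
    {x : ℤ} : (columnYs P x).Nonempty ↔ 0 ≤ x ∧ x ≤ maxX P := by
  constructor
  · rintro ⟨y, hy⟩
    have h := mem_columnYs.mp hy
    exact ⟨(hN.1 _ h).1, fst_le_maxX h⟩
  · rintro ⟨h0, hm⟩
    obtain ⟨a, ha, ha0⟩ := hN.2.1
    obtain ⟨b, hb, hbm⟩ := exists_fst_eq_maxX hP.1
    obtain ⟨p, hp, hpx⟩ := poly_fst_ivt hP (c := x) ha hb (by omega) (by omega)
    exact ⟨p.2, mem_columnYs.mpr (by rwa [← hpx, Prod.mk.eta])⟩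

/-- translation in the `y` direction -/
def tr (v : ℤ) (P : Finset Cell) : Finset Cell := P.image (fun c => (c.1, c.2 + v))

lemma mem_tr {v : ℤ} {P : Finset Cell} {c : Cell} :
    c ∈ tr v P ↔ (c.1, c.2 - v) ∈ P := by
  simp only [tr, Finset.mem_image]
  constructor
  · rintro ⟨d, hd, rfl⟩; simpa using hd
  · intro h; exact ⟨(c.1, c.2 - v), h, by simp⟩

lemma tr_inj (v : ℤ) : Function.Injective (fun c : Cell => (c.1, c.2 + v)) := by
  rintro ⟨a1, a2⟩ ⟨b1, b2⟩ h
  simp only [Prod.mk.injEq] at h ⊢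
  omega

lemma card_tr (v : ℤ) (P : Finset Cell) : (tr v P).card = P.card :=
  Finset.card_image_of_injective _ (tr_inj v)

lemma tr_tr (v w : ℤ) (P : Finset Cell) : tr v (tr w P) = tr (v + w) P := by
  ext c; simp only [mem_tr]; constructor <;> intro h <;> convert h using 2 <;> omega

lemma tr_zero (P : Finset Cell) : tr 0 P = P := by
  ext c; simp [mem_tr]

lemma columnYs_tr {v : ℤ} {P : Finset Cell} {x : ℤ} {y : ℤ} :
    y ∈ columnYs (tr v P) x ↔ y - v ∈ columnYs P x := by
  simp only [mem_columnYs, mem_tr]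

lemma hexAdj_tr {a b : Cell} (v : ℤ) (h : HexAdj a b) :
    HexAdj (a.1, a.2 + v) (b.1, b.2 + v) := by
  apply hexAdj_of_diff
  rcases hexAdj_cases h with h|h|h|h|h|h <;> simp only [Prod.fst, Prod.snd] <;> omega

lemma poly_tr {P : Finset Cell} (v : ℤ) (hP : IsPolyomino P) : IsPolyomino (tr v P) := by
  obtain ⟨c, hc⟩ := hP.1
  constructor
  · exact ⟨(c.1, c.2 + v), Finset.mem_image.mpr ⟨c, hc, rfl⟩⟩
  · have key : ∀ a b : Cell, Conn P a b →
        Conn (tr v P) (a.1, a.2 + v) (b.1, b.2 + v) := by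
      intro a b h
      induction h with
      | refl => exact .refl
      | tail _ hstep ih =>
        refine ih.tail ⟨?_, ?_, hexAdj_tr v hstep.2.2⟩
        · exact Finset.mem_image.mpr ⟨_, hstep.1, rfl⟩
        · exact Finset.mem_image.mpr ⟨_, hstep.2.1, rfl⟩
    intro a ha b hb
    obtain ⟨a', ha', rfl⟩ := Finset.mem_image.mp ha
    obtain ⟨b', hb', rfl⟩ := Finset.mem_image.mp hb
    exact key a' b' (hP.2 a' ha' b' hb')

lemma image_add_Icc (a b v : ℤ) :
    (Finset.Icc a b).image (fun y => y + v) = Finset.Icc (a + v) (b + v) := by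
  ext y
  simp only [Finset.mem_image, Finset.mem_Icc]
  constructor
  · rintro ⟨z, hz, rfl⟩; omega
  · intro h; exact ⟨y - v, by omega, by omega⟩

lemma columnYs_tr_eq (v : ℤ) (P : Finset Cell) (x : ℤ) :
    columnYs (tr v P) x = (columnYs P x).image (fun y => y + v) := by
  ext y
  simp only [columnYs_tr, Finset.mem_image]
  constructor
  · intro h; exact ⟨y - v, h, by omega⟩
  · rintro ⟨z, hz, rfl⟩; simpa using hz

lemma cc_tr {P : Finset Cell} (v : ℤ) (hcc : ColumnConvex P) : ColumnConvex (tr v P) := by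
  intro x hx
  have hx' : (columnYs P x).Nonempty := by
    obtain ⟨y, hy⟩ := hx
    exact ⟨y - v, columnYs_tr.mp hy⟩
  rw [columnYs_tr_eq, column_eq_Icc hcc hx', image_add_Icc]
  exact numComponents_Icc (by
    have := Finset.min'_le _ _ (Finset.max'_mem _ hx')
    omega)

end CC
namespace CC

lemma conn_vert_aux {P : Finset Cell} {x a b : ℤ}
    (hIcc : columnYs P x = Finset.Icc a b) :
    ∀ (k : ℕ) (y : ℤ), y ∈ Finset.Icc a b → y + (k:ℤ) ∈ Finset.Icc a b →
      Conn P (x, y) (x, y + (k:ℤ)) := by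
  intro k
  induction k with
  | zero => intro y h1 _; simpa using Relation.ReflTransGen.refl
  | succ k ih =>
    intro y h1 h2
    rw [Finset.mem_Icc] at h1 h2
    have hk : y + (k:ℤ) ∈ Finset.Icc a b := by rw [Finset.mem_Icc]; push_cast at h2 ⊢; omega
    have hk1 : y + ((k:ℤ)+1) ∈ Finset.Icc a b := by rw [Finset.mem_Icc]; push_cast at h2 ⊢; omega
    have h3 : Conn P (x, y) (x, y + (k:ℤ)) := ih y (Finset.mem_Icc.mpr h1) hk
    have hk1' : y + (k:ℤ) + 1 ∈ Finset.Icc a b := by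
      rw [Finset.mem_Icc]; push_cast at h2; omega
    have step : Adj P (x, y + (k:ℤ)) (x, y + (k:ℤ) + 1) :=
      ⟨mem_columnYs.mp (hIcc ▸ hk), mem_columnYs.mp (hIcc ▸ hk1'),
        hexAdj_of_diff (by simp)⟩
    have h4 := h3.tail step
    have hcast : y + ((k+1:ℕ):ℤ) = y + (k:ℤ) + 1 := by push_cast; ring
    rw [hcast]
    exact h4

lemma conn_vert {P : Finset Cell} {x a b : ℤ}
    (hIcc : columnYs P x = Finset.Icc a b) {y y' : ℤ}
    (h1 : y ∈ columnYs P x) (h2 : y' ∈ columnYs P x) : Conn P (x, y) (x, y') := by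
  rw [hIcc] at h1 h2
  rcases le_total y y' with h | h
  · have := conn_vert_aux hIcc (y' - y).toNat y h1 (by rwa [Int.toNat_of_nonneg (by omega), add_sub_cancel])
    rwa [Int.toNat_of_nonneg (by omega), add_sub_cancel] at this
  · apply conn_symm
    have := conn_vert_aux hIcc (y - y').toNat y' h2 (by rwa [Int.toNat_of_nonneg (by omega), add_sub_cancel])
    rwa [Int.toNat_of_nonneg (by omega), add_sub_cancel] at this

/-- Connectivity workhorse: a set with contiguous interval columns on `[0,m]`
with adjacent consecutive columns is connected. -/
lemma conn_of_columns {P : Finset Cell} {m : ℤ} (hm : 0 ≤ m)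
    (hcol : ∀ x : ℤ, 0 ≤ x → x ≤ m → ∃ a b : ℤ, a ≤ b ∧ columnYs P x = Finset.Icc a b)
    (hemp : ∀ x : ℤ, (x < 0 ∨ m < x) → columnYs P x = ∅)
    (hadj : ∀ x : ℤ, 0 ≤ x → x < m →
      ∃ y y' : ℤ, y ∈ columnYs P x ∧ y' ∈ columnYs P (x+1) ∧ (y' = y ∨ y' = y + 1)) :
    ∀ a ∈ P, ∀ b ∈ P, Conn P a b := by
  obtain ⟨a0, b0, hab0, hIcc0⟩ := hcol 0 le_rfl hm
  have h0ne : a0 ∈ columnYs P 0 := by rw [hIcc0]; exact Finset.mem_Icc.mpr ⟨le_rfl, hab0⟩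
  set c0 : Cell := (0, a0) with hc0
  have key : ∀ x : ℤ, 0 ≤ x → x ≤ m → ∀ y ∈ columnYs P x, Conn P c0 (x, y) := by
    have base : (0:ℤ) ≤ m → ∀ y ∈ columnYs P 0, Conn P c0 (0, y) := by
      intro _ y hy; exact conn_vert hIcc0 h0ne hy
    have stp : ∀ x : ℤ, 0 ≤ x →
        (x ≤ m → ∀ y ∈ columnYs P x, Conn P c0 (x, y)) →
        (x + 1 ≤ m → ∀ y ∈ columnYs P (x+1), Conn P c0 (x+1, y)) := by
      intro x hx ih hxm y hy
      obtain ⟨y1, y2, hy1, hy2, hd⟩ := hadj x hx (by omega)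
      obtain ⟨a', b', hab', hIcc'⟩ := hcol (x+1) (by omega) hxm
      have h1 : Conn P c0 (x, y1) := ih (by omega) y1 hy1
      have hstep : Adj P (x, y1) (x+1, y2) :=
        ⟨mem_columnYs.mp hy1, mem_columnYs.mp hy2,
          hexAdj_of_diff (by rcases hd with h | h <;> simp <;> omega)⟩
      exact (h1.tail hstep).trans (conn_vert hIcc' hy2 hy)
    exact fun x hx => Int.le_induction base stp x hx
  intro a ha b hb
  have hmem : ∀ c : Cell, c ∈ P → 0 ≤ c.1 ∧ c.1 ≤ m := by
    intro c hc
    by_contra hcon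
    have : columnYs P c.1 = ∅ := hemp c.1 (by omega)
    have : c.2 ∈ columnYs P c.1 := mem_columnYs.mpr (by rwa [Prod.mk.eta])
    simp_all
  have h1 := key a.1 (hmem a ha).1 (hmem a ha).2 a.2 (mem_columnYs.mpr (by rwa [Prod.mk.eta]))
  have h2 := key b.1 (hmem b hb).1 (hmem b hb).2 b.2 (mem_columnYs.mpr (by rwa [Prod.mk.eta]))
  simp only [Prod.mk.eta] at h1 h2
  exact (conn_symm h1).trans h2

lemma cond_bounds {n : ℕ} {P : Finset Cell} (h : Cond n P) :
    ∀ c ∈ P, 0 ≤ c.1 ∧ c.1 ≤ (n:ℤ) ∧ 0 ≤ c.2 ∧ c.2 ≤ (n:ℤ) := by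
  obtain ⟨hP, _, hN, hcard⟩ := h
  intro c hc
  refine ⟨(hN.1 c hc).1, ?_, (hN.1 c hc).2, ?_⟩
  · obtain ⟨a, ha, ha0⟩ := hN.2.1
    have hsub : Finset.Icc (0:ℤ) c.1 ⊆ P.image Prod.fst := by
      intro j hj
      rw [Finset.mem_Icc] at hj
      obtain ⟨p, hp, hpj⟩ := poly_fst_ivt hP (c := j) ha hc (by omega) (by omega)
      exact Finset.mem_image.mpr ⟨p, hp, hpj⟩
    have h1 := Finset.card_le_card hsub
    have h2 := Finset.card_image_le (s := P) (f := Prod.fst)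
    rw [Int.card_Icc] at h1
    have h0 := (hN.1 c hc).1
    omega
  · obtain ⟨a, ha, ha0⟩ := hN.2.2
    have hsub : Finset.Icc (0:ℤ) c.2 ⊆ P.image Prod.snd := by
      intro j hj
      rw [Finset.mem_Icc] at hj
      obtain ⟨p, hp, hpj⟩ := poly_snd_ivt hP (c := j) ha hc (by omega) (by omega)
      exact Finset.mem_image.mpr ⟨p, hp, hpj⟩
    have h1 := Finset.card_le_card hsub
    have h2 := Finset.card_image_le (s := P) (f := Prod.snd)
    rw [Int.card_Icc] at h1
    have h0 := (hN.1 c hc).2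
    omega

def minY (P : Finset Cell) : ℤ := WithTop.untopD 0 (P.image Prod.snd).min

lemma minY_le {P : Finset Cell} {c : Cell} (hc : c ∈ P) : minY P ≤ c.2 := by
  have hne : (P.image Prod.snd).Nonempty := ⟨c.2, Finset.mem_image.mpr ⟨c, hc, rfl⟩⟩
  rw [minY, ← Finset.coe_min' hne, WithTop.untopD_coe]
  exact Finset.min'_le _ _ (Finset.mem_image.mpr ⟨c, hc, rfl⟩)

lemma exists_snd_eq_minY {P : Finset Cell} (hP : P.Nonempty) : ∃ c ∈ P, c.2 = minY P := by
  have hne : (P.image Prod.snd).Nonempty := hP.image _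
  obtain ⟨c, hc, hcm⟩ := Finset.mem_image.mp (Finset.min'_mem _ hne)
  exact ⟨c, hc, by rw [minY, ← Finset.coe_min' hne, WithTop.untopD_coe, hcm]⟩

lemma normalized_tr_minY {Q : Finset Cell} (hQ : Q.Nonempty)
    (hfst : ∀ c ∈ Q, 0 ≤ c.1) (hfst0 : ∃ c ∈ Q, c.1 = 0) :
    Normalized (tr (-(minY Q)) Q) := by
  refine ⟨?_, ?_, ?_⟩
  · intro c hc
    rw [mem_tr] at hc
    have h1 := hfst _ hc
    have h2 := minY_le hc
    simp only at h1 h2 ⊢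
    omega
  · obtain ⟨c, hc, hc0⟩ := hfst0
    exact ⟨(c.1, c.2 - minY Q), mem_tr.mpr (by simpa [sub_neg_eq_add, sub_add_cancel] using (by rwa [Prod.mk.eta] : (c.1, c.2) ∈ Q)), hc0⟩
  · obtain ⟨c, hc, hcm⟩ := exists_snd_eq_minY hQ
    refine ⟨(c.1, 0), mem_tr.mpr ?_, rfl⟩
    simpa [hcm.symm] using (by rwa [Prod.mk.eta] : (c.1, c.2) ∈ Q)

end CC
namespace CC

def colMin (s : Finset ℤ) : ℤ := WithTop.untopD 0 s.min
def colMax (s : Finset ℤ) : ℤ := WithBot.unbotD 0 s.max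

lemma colMin_eq {s : Finset ℤ} (hs : s.Nonempty) : colMin s = s.min' hs := by
  rw [colMin, ← Finset.coe_min' hs, WithTop.untopD_coe]

lemma colMax_eq {s : Finset ℤ} (hs : s.Nonempty) : colMax s = s.max' hs := by
  rw [colMax, ← Finset.coe_max' hs, WithBot.unbotD_coe]

lemma colMin_mem {s : Finset ℤ} (hs : s.Nonempty) : colMin s ∈ s := by
  rw [colMin_eq hs]; exact Finset.min'_mem _ _

lemma colMax_mem {s : Finset ℤ} (hs : s.Nonempty) : colMax s ∈ s := by
  rw [colMax_eq hs]; exact Finset.max'_mem _ _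

lemma colMin_le {s : Finset ℤ} {y : ℤ} (hy : y ∈ s) : colMin s ≤ y := by
  rw [colMin_eq ⟨y, hy⟩]; exact Finset.min'_le _ _ hy

lemma le_colMax {s : Finset ℤ} {y : ℤ} (hy : y ∈ s) : y ≤ colMax s := by
  rw [colMax_eq ⟨y, hy⟩]; exact Finset.le_max' _ _ hy

lemma colMin_Icc {a b : ℤ} (hab : a ≤ b) : colMin (Finset.Icc a b) = a := by
  have hs : (Finset.Icc a b).Nonempty := Finset.nonempty_Icc.mpr hab
  have h1 := colMin_mem hs
  have h2 := colMin_le (Finset.mem_Icc.mpr ⟨le_rfl, hab⟩)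
  rw [Finset.mem_Icc] at h1; omega

lemma colMax_Icc {a b : ℤ} (hab : a ≤ b) : colMax (Finset.Icc a b) = b := by
  have hs : (Finset.Icc a b).Nonempty := Finset.nonempty_Icc.mpr hab
  have h1 := colMax_mem hs
  have h2 := le_colMax (Finset.mem_Icc.mpr ⟨hab, le_rfl⟩)
  rw [Finset.mem_Icc] at h1; omega

/-- A nonempty column of a column-convex polyomino, via colMin/colMax. -/
lemma column_eq_Icc2 {P : Finset Cell} (hcc : ColumnConvex P) {x : ℤ}
    (hx : (columnYs P x).Nonempty) :
    columnYs P x = Finset.Icc (colMin (columnYs P x)) (colMax (columnYs P x)) := by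
  rw [colMin_eq hx, colMax_eq hx]; exact column_eq_Icc hcc hx

def strip (x0 b : ℤ) (k : ℕ) : Finset Cell :=
  (Finset.Icc b (b + k - 1)).image (fun y => (x0, y))

lemma mem_strip {x0 b : ℤ} {k : ℕ} {c : Cell} :
    c ∈ strip x0 b k ↔ c.1 = x0 ∧ b ≤ c.2 ∧ c.2 ≤ b + k - 1 := by
  simp only [strip, Finset.mem_image, Finset.mem_Icc]
  constructor
  · rintro ⟨y, hy, rfl⟩; exact ⟨rfl, hy.1, hy.2⟩
  · rintro ⟨h1, h2, h3⟩; exact ⟨c.2, ⟨h2, h3⟩, by rw [← h1, Prod.mk.eta]⟩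

lemma card_strip (x0 b : ℤ) (k : ℕ) : (strip x0 b k).card = k := by
  rw [strip, Finset.card_image_of_injective _ (fun y z h => by simpa using h),
    Int.card_Icc]
  omega

lemma columnYs_strip {x0 b : ℤ} {k : ℕ} {x y : ℤ} :
    y ∈ columnYs (strip x0 b k) x ↔ x = x0 ∧ b ≤ y ∧ y ≤ b + k - 1 := by
  rw [mem_columnYs, mem_strip]

lemma columnYs_union {P Q : Finset Cell} {x y : ℤ} :
    y ∈ columnYs (P ∪ Q) x ↔ y ∈ columnYs P x ∨ y ∈ columnYs Q x := by
  simp only [mem_columnYs, Finset.mem_union]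

lemma maxX_tr (v : ℤ) (P : Finset Cell) : maxX (tr v P) = maxX P := by
  have himg : (tr v P).image Prod.fst = P.image Prod.fst := by
    ext z
    simp only [tr, Finset.image_image, Finset.mem_image]
    rfl
  rw [maxX, maxX, himg]

lemma minY_tr {P : Finset Cell} (hP : P.Nonempty) (v : ℤ) : minY (tr v P) = minY P + v := by
  obtain ⟨c, hc, hcm⟩ := exists_snd_eq_minY hP
  have h1 : minY (tr v P) ≤ minY P + v := by
    have : (c.1, c.2 + v) ∈ tr v P := mem_tr.mpr (by simpa using (by rwa [Prod.mk.eta] : (c.1, c.2) ∈ P))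
    have := minY_le this
    simp only at this; omega
  have h2 : minY P + v ≤ minY (tr v P) := by
    have htr : (tr v P).Nonempty := hP.image _
    obtain ⟨d, hd, hdm⟩ := exists_snd_eq_minY htr
    rw [mem_tr] at hd
    have := minY_le hd
    simp only at this hdm; omega
  omega

lemma minY_normalized {P : Finset Cell} (hN : Normalized P) (hP : P.Nonempty) :
    minY P = 0 := by
  obtain ⟨c, hc, hc0⟩ := hN.2.2
  obtain ⟨d, hd, hdm⟩ := exists_snd_eq_minY hP
  have h1 := minY_le hc
  have h2 := (hN.1 d hd).2
  omega

/-- adjacency between consecutive nonempty columns of a polyomino -/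
lemma cross_adj {P : Finset Cell} (hP : IsPolyomino P) {x : ℤ}
    (hx : (columnYs P x).Nonempty) (hx1 : (columnYs P (x+1)).Nonempty) :
    ∃ y y' : ℤ, y ∈ columnYs P x ∧ y' ∈ columnYs P (x+1) ∧ (y' = y ∨ y' = y + 1) := by
  obtain ⟨y0, hy0⟩ := hx
  obtain ⟨y1, hy1⟩ := hx1
  have hconn := hP.2 _ (mem_columnYs.mp hy0) _ (mem_columnYs.mp hy1)
  obtain ⟨u, hu, v, hv, hu1, hv1, hd⟩ := conn_cross hconn x (by simp) (by simp)
  refine ⟨u.2, v.2, mem_columnYs.mpr (by rwa [← hu1, Prod.mk.eta]),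
    mem_columnYs.mpr (by rwa [← hv1, Prod.mk.eta]), hd⟩

lemma card_filter_eq_card_columnYs (P : Finset Cell) (x : ℤ) :
    (P.filter (fun c => c.1 = x)).card = (columnYs P x).card := by
  rw [columnYs]
  exact (Finset.card_image_of_injOn (fun c hc d hd h => by
    rw [Finset.mem_coe, Finset.mem_filter] at hc hd
    exact Prod.ext (hc.2.trans hd.2.symm) h)).symm

end CC
namespace CC

def extIcc (P : Finset Cell) (k : ℕ) : Finset ℤ :=
  Finset.Icc (colMin (lastCol P) - k + 1) (colMax (lastCol P) + 1)

def delete (P : Finset Cell) : Finset Cell := P.filter (fun c => c.1 ≠ maxX P)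

def compose (k : ℕ) (P' : Finset Cell) (b' : ℤ) : Finset Cell :=
  tr (max 0 (-b')) P' ∪ strip (maxX P' + 1) (b' + max 0 (-b')) k

def decompose (P : Finset Cell) : ℕ × Finset Cell × ℤ :=
  ((lastCol P).card, tr (-(minY (delete P))) (delete P),
    colMin (lastCol P) - minY (delete P))

lemma columnYs_empty_of {P : Finset Cell} (hP : IsPolyomino P) (hN : Normalized P)
    {x : ℤ} (hx : x < 0 ∨ maxX P < x) : columnYs P x = ∅ := by
  rw [← Finset.not_nonempty_iff_eq_empty, columnYs_nonempty_iff hP hN]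
  omega

theorem compose_spec {n' k : ℕ} {P' : Finset Cell} {b' : ℤ}
    (hC : Cond n' P') (hk : 1 ≤ k) (hb : b' ∈ extIcc P' k) :
    Cond (n' + k) (compose k P' b') ∧
    maxX (compose k P' b') = maxX P' + 1 ∧
    lastCol (compose k P' b') =
      Finset.Icc (b' + max 0 (-b')) (b' + max 0 (-b') + k - 1) ∧
    decompose (compose k P' b') = (k, P', b') := by
  obtain ⟨hP', hcc', hN', hcard'⟩ := hC
  set M := maxX P' with hM
  set s := max 0 (-b') with hs
  set C := compose k P' b' with hCdef
  have hs0 : 0 ≤ s := le_max_left _ _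
  have hbs : 0 ≤ b' + s := by omega
  have hM0 : 0 ≤ M := maxX_nonneg hN' hP'.1
  have hlast_ne : (lastCol P').Nonempty := lastCol_nonempty hP'.1
  set β := colMin (lastCol P') with hβ
  set τ := colMax (lastCol P') with hτ
  have hβτ : β ≤ τ := colMin_le (colMax_mem hlast_ne)
  have hbb : β - k + 1 ≤ b' ∧ b' ≤ τ + 1 := by
    rw [extIcc, Finset.mem_Icc] at hb; omega
  have hlastIcc : columnYs P' M = Finset.Icc β τ := column_eq_Icc2 hcc' hlast_ne
  -- pointwise description of columns of C
  have hmemC : ∀ x y : ℤ, y ∈ columnYs C x ↔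
      (y - s ∈ columnYs P' x ∨ (x = M + 1 ∧ b' + s ≤ y ∧ y ≤ b' + s + k - 1)) := by
    intro x y
    rw [hCdef, compose, columnYs_union, columnYs_tr, columnYs_strip]
  have hempP' : ∀ x : ℤ, (x < 0 ∨ M < x) → columnYs P' x = ∅ :=
    fun x hx => columnYs_empty_of hP' hN' hx
  have hcolP' : ∀ x : ℤ, 0 ≤ x → x ≤ M → (columnYs P' x).Nonempty :=
    fun x h1 h2 => (columnYs_nonempty_iff hP' hN').mpr ⟨h1, h2⟩
  have hColIcc : ∀ x : ℤ, 0 ≤ x → x ≤ M + 1 →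
      ∃ a b : ℤ, a ≤ b ∧ columnYs C x = Finset.Icc a b := by
    intro x h1 h2
    rcases lt_or_eq_of_le h2 with h2' | h2'
    · have hx : x ≤ M := by omega
      have hne := hcolP' x h1 hx
      refine ⟨colMin (columnYs P' x) + s, colMax (columnYs P' x) + s,
        by have := colMin_le (colMax_mem hne); omega, ?_⟩
      ext y
      rw [hmemC, Finset.mem_Icc]
      constructor
      · rintro (hy | hy)
        · have h3 := colMin_le hy; have h4 := le_colMax hy; omega
        · omega
      · intro hy
        left
        rw [column_eq_Icc2 hcc' hne, Finset.mem_Icc]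
        omega
    · refine ⟨b' + s, b' + s + k - 1, by omega, ?_⟩
      ext y
      rw [hmemC, Finset.mem_Icc]
      constructor
      · rintro (hy | hy)
        · rw [hempP' x (by omega)] at hy; simp at hy
        · omega
      · intro hy; right; exact ⟨h2', hy.1, hy.2⟩
  have hempC : ∀ x : ℤ, (x < 0 ∨ M + 1 < x) → columnYs C x = ∅ := by
    intro x hx
    rw [← Finset.not_nonempty_iff_eq_empty]
    rintro ⟨y, hy⟩
    rw [hmemC] at hy
    rcases hy with hy | hy
    · rw [hempP' x (by omega)] at hy; simp at hy
    · omega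
  have hadjC : ∀ x : ℤ, 0 ≤ x → x < M + 1 →
      ∃ y y' : ℤ, y ∈ columnYs C x ∧ y' ∈ columnYs C (x+1) ∧ (y' = y ∨ y' = y + 1) := by
    intro x h1 h2
    rcases lt_or_eq_of_le (by omega : x + 1 ≤ M + 1) with h2' | h2'
    · obtain ⟨y, y', hy, hy', hd⟩ := cross_adj hP' (hcolP' x h1 (by omega)) (hcolP' (x+1) (by omega) (by omega))
      exact ⟨y + s, y' + s, (hmemC _ _).mpr (Or.inl (by simpa using hy)),
        (hmemC _ _).mpr (Or.inl (by simpa using hy')), by omega⟩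
    · have hxM : x = M := by omega
      subst hxM
      rcases le_or_gt b' τ with hcase | hcase
      · refine ⟨max b' β + s, max b' β + s, ?_, ?_, Or.inl rfl⟩
        · refine (hmemC _ _).mpr (Or.inl ?_)
          rw [hlastIcc, Finset.mem_Icc]
          constructor <;> simp [le_max_iff, max_le_iff] <;> omega
        · exact (hmemC _ _).mpr (Or.inr ⟨rfl, by omega, by omega⟩)
      · have hb'' : b' = τ + 1 := by omega
        refine ⟨τ + s, τ + s + 1, ?_, ?_, Or.inr rfl⟩
        · refine (hmemC _ _).mpr (Or.inl ?_)
          rw [hlastIcc, Finset.mem_Icc]; constructor <;> simp <;> omega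
        · exact (hmemC _ _).mpr (Or.inr ⟨rfl, by omega, by omega⟩)
  have hstrip_mem : ((M + 1 : ℤ), b' + s) ∈ C := by
    rw [hCdef, compose]
    refine Finset.mem_union_right _ (mem_strip.mpr ⟨rfl, le_rfl, by simp; omega⟩)
  have hCne : C.Nonempty := ⟨_, hstrip_mem⟩
  have hfstC : ∀ c : Cell, c ∈ C → c.1 ≤ M + 1 ∧ 0 ≤ c.1 ∧ 0 ≤ c.2 := by
    intro c hc
    rw [hCdef, compose, Finset.mem_union] at hc
    rcases hc with hc | hc
    · rw [mem_tr] at hc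
      have h1 := fst_le_maxX hc
      have h2 := hN'.1 _ hc
      simp only at h1 h2
      exact ⟨by omega, h2.1, by have := h2.2; omega⟩
    · rw [mem_strip] at hc
      omega
  have hmaxC : maxX C = M + 1 :=
    maxX_eq_of (fun c hc => (hfstC c hc).1) ⟨_, hstrip_mem, rfl⟩
  have hpoly : IsPolyomino C := by
    refine ⟨hCne, conn_of_columns (by omega) hColIcc hempC hadjC⟩
  have hccC : ColumnConvex C := by
    intro x hx
    have hxr : 0 ≤ x ∧ x ≤ M + 1 := by
      by_contra hcon
      rw [hempC x (by omega)] at hx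
      exact Finset.not_nonempty_empty hx
    obtain ⟨a, b, hab, hIcc⟩ := hColIcc x hxr.1 hxr.2
    rw [hIcc]
    exact numComponents_Icc hab
  have hnormC : Normalized C := by
    refine ⟨fun c hc => ⟨(hfstC c hc).2.1, (hfstC c hc).2.2⟩, ?_, ?_⟩
    · obtain ⟨c, hc, hc0⟩ := hN'.2.1
      refine ⟨(c.1, c.2 + s), ?_, hc0⟩
      rw [hCdef, compose]
      refine Finset.mem_union_left _ (mem_tr.mpr ?_)
      simpa [← hs] using (by rwa [Prod.mk.eta] : (c.1, c.2) ∈ P')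
    · rcases le_or_gt 0 b' with hb0 | hb0
      · obtain ⟨c, hc, hc0⟩ := hN'.2.2
        have hseq : s = 0 := by omega
        refine ⟨(c.1, c.2 + s), ?_, by simpa [hseq] using hc0⟩
        rw [hCdef, compose]
        refine Finset.mem_union_left _ (mem_tr.mpr ?_)
        simpa [← hs] using (by rwa [Prod.mk.eta] : (c.1, c.2) ∈ P')
      · have hseq : b' + s = 0 := by omega
        exact ⟨_, hstrip_mem, by simpa using hseq⟩
  have hdisj : Disjoint (tr s P') (strip (M + 1) (b' + s) k) := by
    rw [Finset.disjoint_left]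
    intro c hc hc'
    rw [mem_tr] at hc
    rw [mem_strip] at hc'
    have := fst_le_maxX hc
    simp only at this
    omega
  have hcardC : C.card = n' + k := by
    rw [hCdef, compose, Finset.card_union_of_disjoint hdisj, card_tr, hcard', card_strip]
  have hlastC : lastCol C = Finset.Icc (b' + s) (b' + s + k - 1) := by
    rw [lastCol, hmaxC]
    ext y
    rw [hmemC, Finset.mem_Icc]
    constructor
    · rintro (hy | hy)
      · rw [hempP' (M+1) (by omega)] at hy; simp at hy
      · omega
    · intro hy; right; exact ⟨rfl, hy.1, hy.2⟩
  have hdel : delete C = tr s P' := by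
    rw [delete, hmaxC]
    ext c
    rw [Finset.mem_filter, hCdef, compose, Finset.mem_union]
    constructor
    · rintro ⟨hc | hc, hne⟩
      · exact hc
      · rw [mem_strip] at hc; omega
    · intro hc
      have h1 : c.1 ≤ M := by
        rw [mem_tr] at hc
        have := fst_le_maxX hc
        simpa using this
      exact ⟨Or.inl hc, by omega⟩
  have hminY : minY (tr s P') = s := by
    rw [minY_tr hP'.1, minY_normalized hN' hP'.1, zero_add]
  have hdec : decompose C = (k, P', b') := by
    rw [decompose, hdel, hminY, hlastC]
    refine Prod.ext ?_ (Prod.ext ?_ ?_)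
    · show (Finset.Icc (b' + s) (b' + s + k - 1)).card = k
      rw [Int.card_Icc]; omega
    · show tr (-s) (tr s P') = P'
      rw [tr_tr, neg_add_cancel, tr_zero]
    · show colMin (Finset.Icc (b' + s) (b' + s + k - 1)) - s = b'
      rw [colMin_Icc (by omega)]; omega
  exact ⟨⟨hpoly, hccC, hnormC, hcardC⟩, hmaxC, hlastC, hdec⟩

end CC
namespace CC

theorem decompose_spec {n : ℕ} {P : Finset Cell} (hC : Cond n P) (hM : 1 ≤ maxX P) :
    1 ≤ (decompose P).1 ∧ (decompose P).1 + 1 ≤ n ∧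
    Cond (n - (decompose P).1) (decompose P).2.1 ∧
    (decompose P).2.2 ∈ extIcc (decompose P).2.1 (decompose P).1 ∧
    compose (decompose P).1 (decompose P).2.1 (decompose P).2.2 = P := by
  obtain ⟨hP, hcc, hN, hcard⟩ := hC
  set M := maxX P with hMdef
  set Q := delete P with hQdef
  have hQmem : ∀ c : Cell, c ∈ Q ↔ c ∈ P ∧ c.1 ≠ M := by
    intro c; rw [hQdef, delete, Finset.mem_filter, ← hMdef]
  have hQcol : ∀ x : ℤ, x ≠ M → columnYs Q x = columnYs P x := by
    intro x hx; ext y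
    rw [mem_columnYs, mem_columnYs, hQmem]
    simp only
    tauto
  have hQcolM : columnYs Q M = ∅ := by
    rw [← Finset.not_nonempty_iff_eq_empty]
    rintro ⟨y, hy⟩
    have := (hQmem _).mp (mem_columnYs.mp hy)
    simp at this
  have hcolP : ∀ x : ℤ, 0 ≤ x → x ≤ M → (columnYs P x).Nonempty :=
    fun x h1 h2 => (columnYs_nonempty_iff hP hN).mpr ⟨h1, h2⟩
  have hempP : ∀ x : ℤ, (x < 0 ∨ M < x) → columnYs P x = ∅ :=
    fun x hx => columnYs_empty_of hP hN hx
  have hQne : Q.Nonempty := by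
    obtain ⟨y, hy⟩ := hcolP (M - 1) (by omega) (by omega)
    exact ⟨(M - 1, y), (hQmem _).mpr ⟨mem_columnYs.mp hy, by simp⟩⟩
  have hmaxQ : maxX Q = M - 1 := by
    apply maxX_eq_of
    · intro c hc
      rw [hQmem] at hc
      have := fst_le_maxX hc.1
      rw [← hMdef] at this
      omega
    · obtain ⟨y, hy⟩ := hcolP (M - 1) (by omega) (by omega)
      exact ⟨(M - 1, y), (hQmem _).mpr ⟨mem_columnYs.mp hy, by simp⟩, rfl⟩
  have hQpoly : IsPolyomino Q := by
    refine ⟨hQne, conn_of_columns (m := M - 1) (by omega) ?_ ?_ ?_⟩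
    · intro x h1 h2
      have hne := hcolP x h1 (by omega)
      rw [hQcol x (by omega)]
      exact ⟨_, _, colMin_le (colMax_mem hne), column_eq_Icc2 hcc hne⟩
    · intro x hx
      rcases eq_or_ne x M with rfl | hxM
      · exact hQcolM
      · rw [hQcol x hxM]
        exact hempP x (by omega)
    · intro x h1 h2
      obtain ⟨y, y', hy, hy', hd⟩ :=
        cross_adj hP (hcolP x h1 (by omega)) (hcolP (x+1) (by omega) (by omega))
      exact ⟨y, y', (hQcol x (by omega)).symm ▸ hy, (hQcol (x+1) (by omega)).symm ▸ hy', hd⟩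
  have hQcc : ColumnConvex Q := by
    intro x hx
    rcases eq_or_ne x M with rfl | hxM
    · rw [hQcolM] at hx; exact absurd hx Finset.not_nonempty_empty
    · rw [hQcol x hxM] at hx ⊢
      exact hcc x hx
  -- cardinality bookkeeping
  set k := (lastCol P).card with hkdef
  have hlastP_ne : (lastCol P).Nonempty := lastCol_nonempty hP.1
  have hk1 : 1 ≤ k := Finset.card_pos.mpr hlastP_ne
  have hcardsplit : (P.filter (fun c => c.1 = M)).card = k := by
    rw [hkdef, lastCol, ← hMdef, card_filter_eq_card_columnYs]
  have hcardQ : Q.card + k = n := by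
    have hsplit := Finset.card_filter_add_card_filter_not
      (s := P) (p := fun c : Cell => c.1 = M)
    have hQeq : Q = P.filter (fun c : Cell => ¬ c.1 = M) := by
      ext c; rw [hQmem, Finset.mem_filter]
    rw [← hcard, ← hcardsplit, hQeq]
    omega
  have hkn : k + 1 ≤ n := by
    have := Finset.card_pos.mpr hQne
    omega
  -- the translated rest
  set t := minY Q with htdef
  have ht0 : 0 ≤ t := by
    obtain ⟨c, hc, hcm⟩ := exists_snd_eq_minY hQne
    rw [← htdef] at hcm
    have := (hN.1 c ((hQmem c).mp hc).1).2
    omega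
  set P2 := tr (-t) Q with hP2def
  have hcond2 : Cond (n - k) P2 := by
    refine ⟨poly_tr _ hQpoly, cc_tr _ hQcc, ?_, ?_⟩
    · apply normalized_tr_minY hQne
      · exact fun c hc => (hN.1 c ((hQmem c).mp hc).1).1
      · obtain ⟨y, hy⟩ := hcolP 0 le_rfl (by omega)
        exact ⟨(0, y), (hQmem _).mpr ⟨mem_columnYs.mp hy, by simp; omega⟩, rfl⟩
    · rw [hP2def, card_tr]; omega
  have hmax2 : maxX P2 = M - 1 := by rw [hP2def, maxX_tr, hmaxQ]
  -- last columns
  set β₀ := colMin (lastCol P) with hβ₀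
  set τ₀ := colMax (lastCol P) with hτ₀
  have hβτ₀ : β₀ ≤ τ₀ := colMin_le (colMax_mem hlastP_ne)
  have hlastPIcc : columnYs P M = Finset.Icc β₀ τ₀ := by
    have := column_eq_Icc2 hcc (x := M) (by rwa [lastCol, ← hMdef] at hlastP_ne)
    rw [this, hβ₀, hτ₀, lastCol, ← hMdef]
  have hkval : (k : ℤ) = τ₀ - β₀ + 1 := by
    rw [hkdef, lastCol, ← hMdef, hlastPIcc, Int.card_Icc]
    omega
  have hcolM1_ne : (columnYs P (M-1)).Nonempty := hcolP (M-1) (by omega) (by omega)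
  set β₁ := colMin (columnYs P (M-1)) with hβ₁
  set τ₁ := colMax (columnYs P (M-1)) with hτ₁
  have hβτ₁ : β₁ ≤ τ₁ := colMin_le (colMax_mem hcolM1_ne)
  have hcolM1 : columnYs P (M-1) = Finset.Icc β₁ τ₁ := column_eq_Icc2 hcc hcolM1_ne
  have hlast2 : lastCol P2 = Finset.Icc (β₁ - t) (τ₁ - t) := by
    rw [lastCol, hmax2]
    ext y
    rw [hP2def, columnYs_tr, sub_neg_eq_add, hQcol (M-1) (by omega), hcolM1,
      Finset.mem_Icc, Finset.mem_Icc]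
    omega
  set b' := β₀ - t with hb'def
  -- the adjacency constraint
  obtain ⟨y, y', hy, hy', hd⟩ := cross_adj hP hcolM1_ne (by
    rw [show M - 1 + 1 = M by ring]
    exact hcolP M (by omega) le_rfl)
  rw [show M - 1 + 1 = M by ring] at hy'
  rw [hcolM1, Finset.mem_Icc] at hy
  rw [hlastPIcc, Finset.mem_Icc] at hy'
  have hb'mem : b' ∈ extIcc P2 k := by
    rw [extIcc, hlast2, colMin_Icc (by omega), colMax_Icc (by omega), Finset.mem_Icc]
    omega
  -- β₀ = 0 or t = 0
  have hβ₀0 : 0 ≤ β₀ := by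
    have hmem : (M, β₀) ∈ P := by
      have := colMin_mem (s := columnYs P M) (by rwa [lastCol, ← hMdef] at hlastP_ne)
      rw [hβ₀, lastCol, ← hMdef]
      exact mem_columnYs.mp this
    exact (hN.1 _ hmem).2
  have hdis : t = 0 ∨ β₀ = 0 := by
    obtain ⟨c, hc, hcm⟩ := exists_snd_eq_minY hP.1
    rw [minY_normalized hN hP.1] at hcm
    rcases eq_or_ne c.1 M with hcM | hcM
    · right
      have : c.2 ∈ columnYs P M := mem_columnYs.mpr (by rw [← hcM, Prod.mk.eta]; exact hc)
      rw [hlastPIcc, Finset.mem_Icc] at this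
      omega
    · left
      have : c ∈ Q := (hQmem c).mpr ⟨hc, hcM⟩
      have := minY_le this
      rw [← htdef] at this
      omega
  have hst : max 0 (-b') = t := by
    rcases hdis with h | h
    · rw [hb'def, h, sub_zero]
      exact max_eq_left (by omega)
    · rw [hb'def, h, zero_sub, neg_neg]
      exact max_eq_right ht0
  -- reconstruction
  have hstripM : strip M β₀ k = P.filter (fun c => c.1 = M) := by
    ext c
    rw [mem_strip, Finset.mem_filter]
    constructor
    · rintro ⟨h1, h2, h3⟩
      have : c.2 ∈ columnYs P M := by
        rw [hlastPIcc, Finset.mem_Icc]; omega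
      refine ⟨?_, h1⟩
      have := mem_columnYs.mp this
      rwa [← h1, Prod.mk.eta] at this
    · rintro ⟨h1, h2⟩
      have : c.2 ∈ columnYs P M := mem_columnYs.mpr (by rwa [← h2, Prod.mk.eta])
      rw [hlastPIcc, Finset.mem_Icc] at this
      exact ⟨h2, this.1, by omega⟩
  have hcompose : compose k P2 b' = P := by
    rw [compose, hmax2, hst, hP2def, tr_tr, add_neg_cancel, tr_zero,
      show M - 1 + 1 = M by ring, show b' + t = β₀ by rw [hb'def]; ring, hstripM]
    ext c
    rw [Finset.mem_union, hQmem, Finset.mem_filter]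
    constructor
    · rintro (h | h)
      · exact h.1
      · exact h.1
    · intro hc
      rcases eq_or_ne c.1 M with h | h
      · exact Or.inr ⟨hc, h⟩
      · exact Or.inl ⟨hc, h⟩
  have hdecP : decompose P = (k, P2, b') := by
    rw [decompose, ← hQdef, ← htdef, ← hkdef, ← hP2def, ← hβ₀, ← hb'def]
  rw [hdecP]
  exact ⟨hk1, hkn, hcond2, hb'mem, hcompose⟩

end CC
namespace CC

lemma single_spec {n : ℕ} (hn : 1 ≤ n) :
    Cond n (strip 0 0 n) ∧ maxX (strip 0 0 n) = 0 ∧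
    lastCol (strip 0 0 n) = Finset.Icc 0 ((n:ℤ) - 1) := by
  have hcol : ∀ x y : ℤ, y ∈ columnYs (strip 0 0 n) x ↔ (x = 0 ∧ 0 ≤ y ∧ y ≤ (n:ℤ) - 1) := by
    intro x y
    rw [columnYs_strip]
    constructor <;> rintro ⟨h1, h2, h3⟩ <;> exact ⟨h1, h2, by omega⟩
  have hmem0 : ((0:ℤ), (0:ℤ)) ∈ strip 0 0 n := mem_strip.mpr ⟨rfl, le_rfl, by omega⟩
  have hmax : maxX (strip 0 0 n) = 0 := by
    apply maxX_eq_of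
    · intro c hc; rw [mem_strip] at hc; omega
    · exact ⟨_, hmem0, rfl⟩
  have hIccs : ∀ x : ℤ, 0 ≤ x → x ≤ 0 → ∃ a b : ℤ, a ≤ b ∧
      columnYs (strip 0 0 n) x = Finset.Icc a b := by
    intro x h1 h2
    refine ⟨0, (n:ℤ) - 1, by omega, ?_⟩
    ext y
    rw [hcol, Finset.mem_Icc]
    omega
  have hpoly : IsPolyomino (strip 0 0 n) := by
    refine ⟨⟨_, hmem0⟩, conn_of_columns (m := 0) le_rfl hIccs ?_ (by omega)⟩
    intro x hx
    rw [← Finset.not_nonempty_iff_eq_empty]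
    rintro ⟨y, hy⟩
    rw [hcol] at hy
    omega
  have hcc : ColumnConvex (strip 0 0 n) := by
    intro x hx
    obtain ⟨y, hy⟩ := hx
    have hx0 : x = 0 := ((hcol x y).mp hy).1
    obtain ⟨a, b, hab, hIcc⟩ := hIccs x (by omega) (by omega)
    rw [hIcc]
    exact numComponents_Icc hab
  have hlast : lastCol (strip 0 0 n) = Finset.Icc 0 ((n:ℤ) - 1) := by
    rw [lastCol, hmax]
    ext y
    rw [hcol, Finset.mem_Icc]
    omega
  refine ⟨⟨hpoly, hcc, ?_, by rw [card_strip]⟩, hmax, hlast⟩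
  refine ⟨?_, ⟨_, hmem0, rfl⟩, ⟨_, hmem0, rfl⟩⟩
  intro c hc
  rw [mem_strip] at hc
  omega

lemma single_unique {n : ℕ} {P : Finset Cell} (h : Cond n P) (hM : maxX P = 0) :
    P = strip 0 0 n := by
  obtain ⟨hP, hcc, hN, hcard⟩ := h
  have hfst : ∀ c : Cell, c ∈ P → c.1 = 0 := by
    intro c hc
    have h1 := (hN.1 c hc).1
    have h2 := fst_le_maxX hc
    omega
  have hcol0ne : (columnYs P 0).Nonempty := by
    obtain ⟨c, hc⟩ := hP.1
    exact ⟨c.2, mem_columnYs.mpr (by rwa [← hfst c hc, Prod.mk.eta])⟩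
  set β := colMin (columnYs P 0) with hβ
  set τ := colMax (columnYs P 0) with hτ
  have hIcc : columnYs P 0 = Finset.Icc β τ := column_eq_Icc2 hcc hcol0ne
  have hβτ : β ≤ τ := colMin_le (colMax_mem hcol0ne)
  have hmemP : ∀ c : Cell, c ∈ P ↔ (c.1 = 0 ∧ β ≤ c.2 ∧ c.2 ≤ τ) := by
    intro c
    constructor
    · intro hc
      have h0 := hfst c hc
      have : c.2 ∈ columnYs P 0 := mem_columnYs.mpr (by rwa [← h0, Prod.mk.eta])
      rw [hIcc, Finset.mem_Icc] at this
      exact ⟨h0, this⟩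
    · rintro ⟨h0, h1, h2⟩
      have : c.2 ∈ columnYs P 0 := by rw [hIcc, Finset.mem_Icc]; exact ⟨h1, h2⟩
      have := mem_columnYs.mp this
      rwa [← h0, Prod.mk.eta] at this
  have hβ0 : β = 0 := by
    have h1 : 0 ≤ β := by
      have := (hmemP (0, β)).mpr ⟨rfl, le_rfl, hβτ⟩
      exact (hN.1 _ this).2
    obtain ⟨c, hc, hc0⟩ := hN.2.2
    have := ((hmemP c).mp hc).2.1
    omega
  have hcardP : P.card = (columnYs P 0).card := by
    rw [← card_filter_eq_card_columnYs]
    congr 1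
    ext c
    rw [Finset.mem_filter]
    exact ⟨fun h => ⟨h, hfst c h⟩, fun h => h.1⟩
  have hτval : τ = (n:ℤ) - 1 := by
    rw [hcard, hIcc, Int.card_Icc] at hcardP
    omega
  ext c
  rw [hmemP, mem_strip, hβ0, hτval]
  omega

open scoped Classical in
noncomputable def box (n : ℕ) : Finset Cell :=
  Finset.Icc ((0:ℤ), (0:ℤ)) ((n:ℤ), (n:ℤ))

lemma subset_box {n : ℕ} {P : Finset Cell} (h : Cond n P) : P ⊆ box n := by
  intro c hc
  obtain ⟨h1, h2, h3, h4⟩ := cond_bounds h c hc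
  rw [box, Finset.mem_Icc]
  exact ⟨⟨h1, h3⟩, ⟨h2, h4⟩⟩

open scoped Classical in
noncomputable def ccF (n : ℕ) : Finset (Finset Cell) := (box n).powerset.filter (Cond n)

open scoped Classical in
noncomputable def wF (n : ℕ) : Finset (Finset Cell × ℤ) :=
  ((box n).powerset ×ˢ Finset.Icc (0:ℤ) (n:ℤ)).filter
    (fun q => Cond n q.1 ∧ q.2 ∈ lastCol q.1)

open scoped Classical in
noncomputable def pairF (n' k : ℕ) : Finset (Finset Cell × ℤ) :=
  ((box n').powerset ×ˢ Finset.Icc (-(k:ℤ)) ((n':ℤ)+1)).filter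
    (fun q => Cond n' q.1 ∧ q.2 ∈ extIcc q.1 k)

noncomputable def wCount (n : ℕ) : ℕ := (wF n).card

lemma mem_ccF {n : ℕ} {P : Finset Cell} : P ∈ ccF n ↔ Cond n P := by
  classical
  rw [ccF]
  simp only [Finset.mem_filter, Finset.mem_powerset]
  exact ⟨fun h => h.2, fun h => ⟨subset_box h, h⟩⟩

lemma ccCount_eq (n : ℕ) : ccCount n = (ccF n).card := by
  have h1 : ccCount n = Nat.card {P : Finset Cell | Cond n P} := rfl
  have h2 : {P : Finset Cell | Cond n P} = ↑(ccF n) := by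
    ext P; simp [mem_ccF]
  rw [h1, Nat.card_coe_set_eq, h2, Set.ncard_coe_finset]

lemma lastCol_bounds {n : ℕ} {P : Finset Cell} (h : Cond n P) {y : ℤ}
    (hy : y ∈ lastCol P) : 0 ≤ y ∧ y ≤ (n:ℤ) := by
  have : (maxX P, y) ∈ P := mem_columnYs.mp hy
  have := cond_bounds h _ this
  exact ⟨this.2.2.1, this.2.2.2⟩

lemma mem_wF {n : ℕ} {q : Finset Cell × ℤ} :
    q ∈ wF n ↔ Cond n q.1 ∧ q.2 ∈ lastCol q.1 := by
  classical
  rw [wF]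
  simp only [Finset.mem_filter, Finset.mem_product, Finset.mem_powerset, Finset.mem_Icc]
  refine ⟨fun h => h.2, fun h => ⟨⟨subset_box h.1, ?_⟩, h⟩⟩
  exact lastCol_bounds h.1 h.2

lemma mem_pairF {n' k : ℕ} {q : Finset Cell × ℤ} :
    q ∈ pairF n' k ↔ Cond n' q.1 ∧ q.2 ∈ extIcc q.1 k := by
  classical
  rw [pairF]
  simp only [Finset.mem_filter, Finset.mem_product, Finset.mem_powerset, Finset.mem_Icc]
  refine ⟨fun h => h.2, fun h => ⟨⟨subset_box h.1, ?_⟩, h⟩⟩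
  obtain ⟨hC, hq⟩ := h
  have hne : (lastCol q.1).Nonempty := lastCol_nonempty hC.1.1
  have h1 := lastCol_bounds hC (colMin_mem hne)
  have h2 := lastCol_bounds hC (colMax_mem hne)
  rw [extIcc, Finset.mem_Icc] at hq
  omega

lemma ccCount_zero : ccCount 0 = 0 := by
  rw [ccCount_eq]
  convert Finset.card_empty
  rw [Finset.eq_empty_iff_forall_notMem]
  intro P hP
  obtain ⟨hpoly, _, _, hcard⟩ := mem_ccF.mp hP
  obtain ⟨c, hc⟩ := hpoly.1
  have := Finset.card_pos.mpr ⟨c, hc⟩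
  omega

lemma wCount_zero : wCount 0 = 0 := by
  rw [wCount]
  convert Finset.card_empty
  rw [Finset.eq_empty_iff_forall_notMem]
  intro q hq
  obtain ⟨⟨hpoly, _, _, hcard⟩, _⟩ := mem_wF.mp hq
  obtain ⟨c, hc⟩ := hpoly.1
  have := Finset.card_pos.mpr ⟨c, hc⟩
  omega

lemma wCount_eq_sum (n : ℕ) : wCount n = ∑ P ∈ ccF n, (lastCol P).card := by
  classical
  rw [wCount, Finset.card_eq_sum_card_fiberwise
    (f := Prod.fst) (t := ccF n) (fun q hq => mem_ccF.mpr ((mem_wF.mp hq).1))]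
  refine Finset.sum_congr rfl fun P hP => ?_
  have hC := mem_ccF.mp hP
  have himg : (wF n).filter (fun q => q.1 = P) = (lastCol P).image (fun y => (P, y)) := by
    ext q
    rw [Finset.mem_filter, mem_wF, Finset.mem_image]
    constructor
    · rintro ⟨⟨h1, h2⟩, rfl⟩
      exact ⟨q.2, h2, by rw [Prod.mk.eta]⟩
    · rintro ⟨y, hy, rfl⟩
      exact ⟨⟨hC, hy⟩, rfl⟩
  rw [himg, Finset.card_image_of_injective _ (fun a b h => by simpa using h)]

lemma card_pairF (n' k : ℕ) : (pairF n' k).card = wCount n' + k * ccCount n' := by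
  classical
  rw [Finset.card_eq_sum_card_fiberwise
    (f := Prod.fst) (t := ccF n') (fun q hq => mem_ccF.mpr ((mem_pairF.mp hq).1))]
  have hfib : ∀ P ∈ ccF n',
      ((pairF n' k).filter (fun q => q.1 = P)).card = (lastCol P).card + k := by
    intro P hP
    have hC := mem_ccF.mp hP
    have himg : (pairF n' k).filter (fun q => q.1 = P) = (extIcc P k).image (fun y => (P, y)) := by
      ext q
      rw [Finset.mem_filter, mem_pairF, Finset.mem_image]
      constructor
      · rintro ⟨⟨h1, h2⟩, rfl⟩
        exact ⟨q.2, h2, by rw [Prod.mk.eta]⟩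
      · rintro ⟨y, hy, rfl⟩
        exact ⟨⟨hC, hy⟩, rfl⟩
    rw [himg, Finset.card_image_of_injective _ (fun a b h => by simpa using h)]
    have hne : (lastCol P).Nonempty := lastCol_nonempty hC.1.1
    have hβτ : colMin (lastCol P) ≤ colMax (lastCol P) := colMin_le (colMax_mem hne)
    have hlastIcc : lastCol P = Finset.Icc (colMin (lastCol P)) (colMax (lastCol P)) := by
      rw [lastCol] at hne ⊢
      exact column_eq_Icc2 hC.2.1 hne
    have hcardext : (extIcc P k).card =
        ((colMax (lastCol P)) + 1 - (colMin (lastCol P) - k + 1) + 1).toNat := by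
      rw [extIcc, Int.card_Icc]
      omega
    have hcardlast : (lastCol P).card =
        (colMax (lastCol P) - colMin (lastCol P) + 1).toNat := by
      conv_lhs => rw [hlastIcc]
      rw [Int.card_Icc]
      omega
    rw [hcardext, hcardlast]
    omega
  rw [Finset.sum_congr rfl hfib, Finset.sum_add_distrib, Finset.sum_const, smul_eq_mul,
    ← wCount_eq_sum, ccCount_eq]
  ring

end CC
namespace CC

theorem R1 {n : ℕ} (hn : 1 ≤ n) :
    ccCount n = 1 + ∑ k ∈ Finset.Icc 1 (n-1), (wCount (n-k) + k * ccCount (n-k)) := by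
  classical
  rw [ccCount_eq]
  have hsplit := Finset.card_filter_add_card_filter_not
    (s := ccF n) (p := fun P => maxX P = 0)
  have h0 : (ccF n).filter (fun P => maxX P = 0) = {strip 0 0 n} := by
    ext P
    rw [Finset.mem_filter, mem_ccF, Finset.mem_singleton]
    constructor
    · rintro ⟨hC, hM⟩; exact single_unique hC hM
    · rintro rfl; exact ⟨(single_spec hn).1, (single_spec hn).2.1⟩
  have h1 : ((ccF n).filter (fun P => ¬ maxX P = 0)).card
      = ((Finset.Icc 1 (n-1)).sigma (fun k => pairF (n-k) k)).card := by
    apply Finset.card_nbij'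
      (i := fun P => ⟨(decompose P).1, (decompose P).2⟩)
      (j := fun q => compose q.1 q.2.1 q.2.2)
    · intro P hP
      rw [Finset.mem_coe, Finset.mem_filter, mem_ccF] at hP
      obtain ⟨hC, hM⟩ := hP
      have hM1 : 1 ≤ maxX P := by
        have h0' := maxX_nonneg hC.2.2.1 hC.1.1
        omega
      obtain ⟨ha, hb, hc, hd, he⟩ := decompose_spec hC hM1
      rw [Finset.mem_coe, Finset.mem_sigma, Finset.mem_Icc, mem_pairF]
      try dsimp only
      exact ⟨⟨ha, by omega⟩, hc, hd⟩
    · rintro ⟨k, q⟩ hq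
      rw [Finset.mem_coe, Finset.mem_sigma, Finset.mem_Icc, mem_pairF] at hq
      try dsimp only at hq
      try dsimp only
      obtain ⟨⟨hk1, hk2⟩, hC, hb⟩ := hq
      obtain ⟨hCond, hmax, _, _⟩ := compose_spec hC hk1 hb
      rw [Finset.mem_coe, Finset.mem_filter, mem_ccF]
      have hnk : n - k + k = n := by omega
      rw [hnk] at hCond
      refine ⟨hCond, ?_⟩
      have := maxX_nonneg hC.2.2.1 hC.1.1
      omega
    · intro P hP
      rw [Finset.mem_coe, Finset.mem_filter, mem_ccF] at hP
      obtain ⟨hC, hM⟩ := hP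
      have hM1 : 1 ≤ maxX P := by
        have h0' := maxX_nonneg hC.2.2.1 hC.1.1
        omega
      exact (decompose_spec hC hM1).2.2.2.2
    · rintro ⟨k, q⟩ hq
      rw [Finset.mem_coe, Finset.mem_sigma, Finset.mem_Icc, mem_pairF] at hq
      try dsimp only at hq
      try dsimp only
      obtain ⟨⟨hk1, hk2⟩, hC, hb⟩ := hq
      have hdec := (compose_spec hC hk1 hb).2.2.2
      try dsimp only
      rw [hdec]
  rw [h0, Finset.card_singleton] at hsplit
  rw [Finset.card_sigma] at h1
  have hsum : ∑ k ∈ Finset.Icc 1 (n-1), (pairF (n-k) k).card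
      = ∑ k ∈ Finset.Icc 1 (n-1), (wCount (n-k) + k * ccCount (n-k)) :=
    Finset.sum_congr rfl fun k _ => card_pairF (n-k) k
  omega

theorem R2 {n : ℕ} (hn : 1 ≤ n) :
    wCount n = n + ∑ k ∈ Finset.Icc 1 (n-1), k * (wCount (n-k) + k * ccCount (n-k)) := by
  classical
  rw [wCount]
  have hsplit := Finset.card_filter_add_card_filter_not
    (s := wF n) (p := fun q => maxX q.1 = 0)
  have h0 : (wF n).filter (fun q => maxX q.1 = 0)
      = {strip 0 0 n} ×ˢ Finset.Icc (0:ℤ) ((n:ℤ) - 1) := by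
    ext q
    rw [Finset.mem_filter, mem_wF, Finset.mem_product, Finset.mem_singleton]
    constructor
    · rintro ⟨⟨hC, hy⟩, hM⟩
      have hq1 := single_unique hC hM
      refine ⟨hq1, ?_⟩
      rw [hq1, (single_spec hn).2.2] at hy
      exact hy
    · rintro ⟨hq1, hy⟩
      refine ⟨⟨?_, ?_⟩, ?_⟩
      · rw [hq1]; exact (single_spec hn).1
      · rw [hq1, (single_spec hn).2.2]; exact hy
      · rw [hq1]; exact (single_spec hn).2.1
  have h0card : ((wF n).filter (fun q => maxX q.1 = 0)).card = n := by
    rw [h0, Finset.card_product, Finset.card_singleton, Int.card_Icc]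
    omega
  have h1 : ((wF n).filter (fun q => ¬ maxX q.1 = 0)).card
      = ((Finset.Icc 1 (n-1)).sigma (fun k => pairF (n-k) k ×ˢ Finset.range k)).card := by
    apply Finset.card_nbij'
      (i := fun q => ⟨(decompose q.1).1,
        ((decompose q.1).2, (q.2 - colMin (lastCol q.1)).toNat)⟩)
      (j := fun t => (compose t.1 t.2.1.1 t.2.1.2,
        t.2.1.2 + max 0 (-(t.2.1.2)) + (t.2.2 : ℤ)))
    · rintro ⟨P, y⟩ hP
      rw [Finset.mem_coe, Finset.mem_filter, mem_wF] at hP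
      try dsimp only at hP
      try dsimp only
      obtain ⟨⟨hC, hy⟩, hM⟩ := hP
      have hM1 : 1 ≤ maxX P := by
        have h0' := maxX_nonneg hC.2.2.1 hC.1.1
        omega
      obtain ⟨ha, hb, hc, hd, he⟩ := decompose_spec hC hM1
      rw [Finset.mem_coe, Finset.mem_sigma, Finset.mem_Icc, Finset.mem_product, mem_pairF, Finset.mem_range]
      try dsimp only
      refine ⟨⟨ha, by omega⟩, ⟨hc, hd⟩, ?_⟩
      -- mark bound
      have hne : (lastCol P).Nonempty := lastCol_nonempty hC.1.1
      have hlastIcc : lastCol P = Finset.Icc (colMin (lastCol P)) (colMax (lastCol P)) := by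
        rw [lastCol] at hne ⊢
        exact column_eq_Icc2 hC.2.1 hne
      have hkcard : (decompose P).1 = (lastCol P).card := rfl
      have hycard : (lastCol P).card = (colMax (lastCol P) - colMin (lastCol P) + 1).toNat := by
        conv_lhs => rw [hlastIcc]
        rw [Int.card_Icc]; omega
      have hy1 := colMin_le hy
      have hy2 := le_colMax hy
      omega
    · rintro ⟨k, q, j⟩ ht
      rw [Finset.mem_coe, Finset.mem_sigma, Finset.mem_Icc, Finset.mem_product, mem_pairF,
        Finset.mem_range] at ht
      try dsimp only at ht
      try dsimp only
      obtain ⟨⟨hk1, hk2⟩, ⟨hC, hb⟩, hj⟩ := ht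
      obtain ⟨hCond, hmax, hlastC, _⟩ := compose_spec hC hk1 hb
      rw [Finset.mem_coe, Finset.mem_filter, mem_wF]
      try dsimp only
      have hnk : n - k + k = n := by omega
      rw [hnk] at hCond
      refine ⟨⟨hCond, ?_⟩, ?_⟩
      · rw [hlastC, Finset.mem_Icc]
        have h1 : 0 ≤ max 0 (-q.2) := le_max_left _ _
        omega
      · have := maxX_nonneg hC.2.2.1 hC.1.1
        omega
    · rintro ⟨P, y⟩ hP
      rw [Finset.mem_coe, Finset.mem_filter, mem_wF] at hP
      try dsimp only at hP
      try dsimp only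
      obtain ⟨⟨hC, hy⟩, hM⟩ := hP
      have hM1 : 1 ≤ maxX P := by
        have h0' := maxX_nonneg hC.2.2.1 hC.1.1
        omega
      obtain ⟨ha, hb, hc, hd, he⟩ := decompose_spec hC hM1
      obtain ⟨_, _, hlastC, _⟩ := compose_spec hc ha hd
      rw [he] at hlastC
      have hcm : colMin (lastCol P) =
          (decompose P).2.2 + max 0 (-(decompose P).2.2) := by
        rw [hlastC, colMin_Icc (by omega)]
      have hy1 := colMin_le hy
      try dsimp only
      rw [he]
      refine Prod.ext rfl ?_
      omega
    · rintro ⟨k, q, j⟩ ht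
      rw [Finset.mem_coe, Finset.mem_sigma, Finset.mem_Icc, Finset.mem_product, mem_pairF,
        Finset.mem_range] at ht
      try dsimp only at ht
      try dsimp only
      obtain ⟨⟨hk1, hk2⟩, ⟨hC, hb⟩, hj⟩ := ht
      obtain ⟨hCond, hmax, hlastC, hdec⟩ := compose_spec hC hk1 hb
      try dsimp only
      rw [hdec]
      have hcm : colMin (lastCol (compose k q.1 q.2)) = q.2 + max 0 (-q.2) := by
        rw [hlastC, colMin_Icc (by omega)]
      have hmark : (q.2 + max 0 (-q.2) + (j:ℤ) - colMin (lastCol (compose k q.1 q.2))).toNat = j := by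
        rw [hcm]; omega
      rw [hmark, Prod.mk.eta]
  rw [Finset.card_sigma] at h1
  have hsum : ∑ k ∈ Finset.Icc 1 (n-1), (pairF (n-k) k ×ˢ Finset.range k).card
      = ∑ k ∈ Finset.Icc 1 (n-1), k * (wCount (n-k) + k * ccCount (n-k)) := by
    refine Finset.sum_congr rfl fun k _ => ?_
    rw [Finset.card_product, Finset.card_range, card_pairF]
    ring
  omega

end CC
namespace CC
open PowerSeries

lemma coeff_mk_mul (f g : ℕ → ℚ) (n : ℕ) :
    (PowerSeries.coeff n) (PowerSeries.mk f * PowerSeries.mk g)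
      = ∑ i ∈ Finset.range (n+1), f i * g (n - i) := by
  rw [PowerSeries.coeff_mul, Finset.Nat.sum_antidiagonal_eq_sum_range_succ_mk]
  simp [PowerSeries.coeff_mk]

lemma sum_range_to_Icc (F : ℕ → ℚ) {n : ℕ} (hn : 1 ≤ n) (hF0 : F 0 = 0) (hFn : F n = 0) :
    ∑ i ∈ Finset.range (n+1), F i = ∑ i ∈ Finset.Icc 1 (n-1), F i := by
  have hset : Finset.range (n+1) = insert 0 (insert n (Finset.Icc 1 (n-1))) := by
    ext i
    simp only [Finset.mem_range, Finset.mem_insert, Finset.mem_Icc]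
    omega
  rw [hset, Finset.sum_insert (by simp only [Finset.mem_insert, Finset.mem_Icc]; omega),
    Finset.sum_insert (by simp only [Finset.mem_Icc]; omega), hF0, hFn]
  ring

lemma keyA :
    PowerSeries.mk (fun n => (ccCount n : ℚ))
    = PowerSeries.mk (fun n => if n = 0 then 0 else (1:ℚ))
      + PowerSeries.mk (fun n => if n = 0 then 0 else (1:ℚ))
        * PowerSeries.mk (fun n => (wCount n : ℚ))
      + PowerSeries.mk (fun n => (n:ℚ)) * PowerSeries.mk (fun n => (ccCount n : ℚ)) := by
  ext n
  rw [map_add, map_add, coeff_mk_mul, coeff_mk_mul, PowerSeries.coeff_mk, PowerSeries.coeff_mk]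
  rcases Nat.eq_zero_or_pos n with rfl | hn
  · simp [ccCount_zero]
  · have hr := congrArg (Nat.cast : ℕ → ℚ) (R1 hn)
    push_cast at hr
    have h1 : ∑ i ∈ Finset.range (n+1),
        (if i = 0 then 0 else (1:ℚ)) * (wCount (n - i) : ℚ)
        = ∑ i ∈ Finset.Icc 1 (n-1), (wCount (n - i) : ℚ) := by
      rw [sum_range_to_Icc _ hn (by simp) (by simp [wCount_zero])]
      refine Finset.sum_congr rfl fun i hi => ?_
      rw [Finset.mem_Icc] at hi
      rw [if_neg (by omega), one_mul]
    have h2 : ∑ i ∈ Finset.range (n+1), (i:ℚ) * (ccCount (n - i) : ℚ)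
        = ∑ i ∈ Finset.Icc 1 (n-1), (i:ℚ) * (ccCount (n - i) : ℚ) := by
      rw [sum_range_to_Icc _ hn (by simp) (by simp [ccCount_zero])]
    rw [h1, h2, if_neg (by omega)]
    rw [hr, Finset.sum_add_distrib]
    push_cast
    ring

lemma keyW :
    PowerSeries.mk (fun n => (wCount n : ℚ))
    = PowerSeries.mk (fun n => (n:ℚ))
      + PowerSeries.mk (fun n => (n:ℚ)) * PowerSeries.mk (fun n => (wCount n : ℚ))
      + PowerSeries.mk (fun n => (n:ℚ)^2) * PowerSeries.mk (fun n => (ccCount n : ℚ)) := by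
  ext n
  rw [map_add, map_add, coeff_mk_mul, coeff_mk_mul, PowerSeries.coeff_mk, PowerSeries.coeff_mk]
  rcases Nat.eq_zero_or_pos n with rfl | hn
  · simp [wCount_zero]
  · have hr := congrArg (Nat.cast : ℕ → ℚ) (R2 hn)
    push_cast at hr
    have h1 : ∑ i ∈ Finset.range (n+1), (i:ℚ) * (wCount (n - i) : ℚ)
        = ∑ i ∈ Finset.Icc 1 (n-1), (i:ℚ) * (wCount (n - i) : ℚ) :=
      sum_range_to_Icc _ hn (by simp) (by simp [wCount_zero])
    have h2 : ∑ i ∈ Finset.range (n+1), (i:ℚ)^2 * (ccCount (n - i) : ℚ)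
        = ∑ i ∈ Finset.Icc 1 (n-1), (i:ℚ)^2 * (ccCount (n - i) : ℚ) :=
      sum_range_to_Icc _ hn (by simp) (by simp [ccCount_zero])
    rw [h1, h2, hr]
    have h3 : ∑ k ∈ Finset.Icc 1 (n-1),
        (k:ℚ) * ((wCount (n-k) : ℚ) + (k:ℚ) * (ccCount (n-k) : ℚ))
        = ∑ k ∈ Finset.Icc 1 (n-1), ((k:ℚ) * (wCount (n-k) : ℚ)
          + (k:ℚ)^2 * (ccCount (n-k) : ℚ)) := by
      refine Finset.sum_congr rfl fun k _ => by ring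
    rw [h3, Finset.sum_add_distrib]
    ring

lemma hX1 : (1 - PowerSeries.X) * PowerSeries.mk (fun n => if n = 0 then 0 else (1:ℚ))
    = PowerSeries.X := by
  ext n
  rw [sub_mul, one_mul, map_sub]
  cases n with
  | zero => simp
  | succ m =>
    rw [PowerSeries.coeff_succ_X_mul, PowerSeries.coeff_mk, PowerSeries.coeff_mk,
      PowerSeries.coeff_X]
    cases m with
    | zero => simp
    | succ l => simp

lemma hX2 : (1 - PowerSeries.X) * PowerSeries.mk (fun n => ((n:ℚ)))
    = PowerSeries.mk (fun n => if n = 0 then 0 else (1:ℚ)) := by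
  ext n
  rw [sub_mul, one_mul, map_sub]
  cases n with
  | zero => simp
  | succ m =>
    rw [PowerSeries.coeff_succ_X_mul, PowerSeries.coeff_mk, PowerSeries.coeff_mk,
      PowerSeries.coeff_mk]
    rw [if_neg (by omega)]
    push_cast
    ring

lemma hX3 : (1 - PowerSeries.X) * PowerSeries.mk (fun n => ((n:ℚ)^2))
    = PowerSeries.mk (fun n => ((n:ℚ))) + PowerSeries.mk (fun n => ((n:ℚ)))
      - PowerSeries.mk (fun n => if n = 0 then 0 else (1:ℚ)) := by
  ext n
  rw [sub_mul, one_mul, map_sub, map_sub, map_add]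
  cases n with
  | zero => simp
  | succ m =>
    rw [PowerSeries.coeff_succ_X_mul]
    simp only [PowerSeries.coeff_mk]
    rw [if_neg (by omega)]
    push_cast
    ring

theorem final :
    ((1 : PowerSeries ℚ) - 6 * PowerSeries.X + 10 * PowerSeries.X ^ 2
        - 7 * PowerSeries.X ^ 3 + PowerSeries.X ^ 4)
      * PowerSeries.mk (fun n => (ccCount n : ℚ))
    = PowerSeries.X - 3 * PowerSeries.X ^ 2 + 3 * PowerSeries.X ^ 3
        - PowerSeries.X ^ 4 := by
  set A := PowerSeries.mk (fun n => (ccCount n : ℚ)) with hA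
  set W := PowerSeries.mk (fun n => (wCount n : ℚ)) with hW
  set S1 := PowerSeries.mk (fun n => if n = 0 then 0 else (1:ℚ)) with hS1
  set S2 := PowerSeries.mk (fun n => ((n:ℚ))) with hS2
  set S3 := PowerSeries.mk (fun n => ((n:ℚ)^2)) with hS3
  set X := (PowerSeries.X : PowerSeries ℚ) with hXdef
  have h1 : A = S1 + S1 * W + S2 * A := keyA
  have h2 : W = S2 + S2 * W + S3 * A := keyW
  have h3 : (1 - X) * S1 = X := hX1
  have h4 : (1 - X) * S2 = S1 := hX2
  have h5 : (1 - X) * S3 = S2 + S2 - S1 := hX3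
  have hP1 : (1-X)^2 * A = (1-X)*X + (1-X)*X*W + X*A := by
    linear_combination ((1-X)^2) * h1 + ((1-X) + (1-X)*W + A) * h3 + ((1-X)*A) * h4
  have hP2 : (1-X)^3 * W = (1-X)*X + (1-X)*X*W + X*(1+X)*A := by
    linear_combination ((1-X)^3) * h2
      + ((1-X)^2 + (1-X)^2*W + 2*(1-X)*A) * h4
      + ((1-X) + (1-X)*W + (2-(1-X))*A) * h3
      + ((1-X)^2*A) * h5
  linear_combination ((1-X)^2 - X) * hP1 + X * hP2

end CC
/-- The area generating function of column-convex hexagonal-celled polyominoes is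
`q(1−q)³ / (1 − 6q + 10q² − 7q³ + q⁴)`. -/
theorem stmt_0 :
    ((1 : PowerSeries ℚ) - 6 * PowerSeries.X + 10 * PowerSeries.X ^ 2
        - 7 * PowerSeries.X ^ 3 + PowerSeries.X ^ 4)
      * PowerSeries.mk (fun n => (ccCount n : ℚ))
    = PowerSeries.X - 3 * PowerSeries.X ^ 2 + 3 * PowerSeries.X ^ 3
        - PowerSeries.X ^ 4 := by
  exact CC.final
end
end

section
/- Let a_n denote the number of column-convex hexagonal-celled polyominoes with area n (counted up to translation). Then a_1 = 1, a_2 = 3, a_3 = 11, a_4 = 42, and for every n ≥ 5 one has a_n = 6·a_{n−1} − 10·a_{n−2} + 7·a_{n−3} − a_{n−4}. -/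
open Finset Filter

noncomputable section

/-! ### Auxiliary development -/

namespace CCAux

/-- Height of the last (rightmost) column of an encoding. -/
def lastH (h0 : ℕ) : List (ℤ × ℕ) → ℕ
  | [] => h0
  | (_, h) :: _ => h

/-- Validity of an encoding: `h0` is the height of the first column, the list
records subsequent columns right-to-left as (offset, height). -/
def EValid (h0 : ℕ) : List (ℤ × ℕ) → Prop
  | [] => 1 ≤ h0
  | (d, h) :: t => EValid h0 t ∧ 1 ≤ h ∧ 1 - (h : ℤ) ≤ d ∧ d ≤ (lastH h0 t : ℤ)

def areaE (h0 : ℕ) (t : List (ℤ × ℕ)) : ℕ := h0 + (t.map Prod.snd).sum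

/-- Bottom ordinate of the last column (first column has bottom 0). -/
def lastL : List (ℤ × ℕ) → ℤ
  | [] => 0
  | (d, _) :: t => lastL t + d

/-- Minimum of the bottom ordinates of all columns. -/
def minL : List (ℤ × ℕ) → ℤ
  | [] => 0
  | (d, _) :: t => min (lastL t + d) (minL t)

/-- The column at abscissa `x`, bottom `l`, height `h`. -/
def colF (x l : ℤ) (h : ℕ) : Finset Cell := ({x} : Finset ℤ) ×ˢ Finset.Ico l (l + h)

/-- The raw polyomino of an encoding. Columns at abscissas 0..len. -/
def raw (h0 : ℕ) : List (ℤ × ℕ) → Finset Cell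
  | [] => colF 0 0 h0
  | (d, h) :: t => raw h0 t ∪ colF ((t.length : ℤ) + 1) (lastL t + d) h

/-- Translate vertically. -/
def trY (t : ℤ) (P : Finset Cell) : Finset Cell := P.image (fun c => (c.1, c.2 + t))

/-- Decode an encoding into its normalized polyomino. -/
def decode (h0 : ℕ) (t : List (ℤ × ℕ)) : Finset Cell := trY (-(minL t)) (raw h0 t)

lemma mem_columnYs {P : Finset Cell} {x y : ℤ} : y ∈ columnYs P x ↔ (x, y) ∈ P := by
  simp only [columnYs, Finset.mem_image, Finset.mem_filter]
  constructor
  · rintro ⟨⟨cx, cy⟩, ⟨hc, rfl⟩, rfl⟩; simpa using hc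
  · intro h; exact ⟨(x, y), ⟨h, rfl⟩, rfl⟩

lemma columnYs_union {P Q : Finset Cell} {x : ℤ} :
    columnYs (P ∪ Q) x = columnYs P x ∪ columnYs Q x := by
  ext y; simp [mem_columnYs, Finset.mem_union]

lemma mem_trY {a : ℤ} {P : Finset Cell} {c : Cell} :
    c ∈ trY a P ↔ (c.1, c.2 - a) ∈ P := by
  simp only [trY, Finset.mem_image]
  constructor
  · rintro ⟨⟨ux, uy⟩, hu, rfl⟩; simpa using hu
  · intro h; exact ⟨(c.1, c.2 - a), h, by simp⟩

lemma columnYs_trY {a : ℤ} {P : Finset Cell} {x : ℤ} :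
    columnYs (trY a P) x = (columnYs P x).image (fun y => y + a) := by
  ext y
  simp only [mem_columnYs, mem_trY, Finset.mem_image]
  constructor
  · intro h; exact ⟨y - a, h, by ring⟩
  · rintro ⟨z, hz, rfl⟩; simpa using hz

lemma columnYs_colF {x l : ℤ} {h : ℕ} {x' : ℤ} :
    columnYs (colF x l h) x' = if x' = x then Finset.Ico l (l + h) else ∅ := by
  split_ifs with hx
  · subst hx; ext y; simp [mem_columnYs, colF]
  · ext y; simp only [mem_columnYs, colF, Finset.mem_product, Finset.mem_singleton,
      Finset.notMem_empty, iff_false]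
    rintro ⟨rfl, -⟩; exact hx rfl

lemma card_colF {x l : ℤ} {h : ℕ} : (colF x l h).card = h := by
  simp [colF, Int.toNat_of_nonneg]

end CCAux
namespace CCAux

lemma columnYs_raw_out {h0 : ℕ} {t : List (ℤ × ℕ)} {x : ℤ}
    (hx : x < 0 ∨ (t.length : ℤ) < x) : columnYs (raw h0 t) x = ∅ := by
  induction t with
  | nil =>
      simp only [raw]
      rw [columnYs_colF]
      simp only [List.length_nil] at hx
      rw [if_neg (by omega)]
  | cons c t ih =>
      obtain ⟨d, h⟩ := c
      simp only [raw, columnYs_union, List.length_cons] at *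
      rw [ih (by push_cast at hx ⊢; omega), columnYs_colF, if_neg (by push_cast at hx ⊢; omega)]
      simp

lemma columnYs_raw_cons {h0 : ℕ} {d : ℤ} {h : ℕ} {t : List (ℤ × ℕ)} {x : ℤ}
    (hx : x ≤ (t.length : ℤ)) :
    columnYs (raw h0 ((d, h) :: t)) x = columnYs (raw h0 t) x := by
  simp only [raw, columnYs_union]
  rw [columnYs_colF, if_neg (by omega)]
  simp

lemma columnYs_raw_last {h0 : ℕ} (t : List (ℤ × ℕ)) :
    columnYs (raw h0 t) (t.length : ℤ) = Finset.Ico (lastL t) (lastL t + lastH h0 t) := by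
  cases t with
  | nil => simp only [raw, lastL, lastH]; rw [columnYs_colF]; norm_num
  | cons c t =>
      obtain ⟨d, h⟩ := c
      simp only [raw, columnYs_union, List.length_cons, lastL, lastH]
      rw [columnYs_colF, columnYs_raw_out (h0 := h0) (t := t) (by push_cast; omega)]
      rw [if_pos (by push_cast; ring)]
      simp

/-- every column in range is a nonempty Ico -/
lemma columnYs_raw_int {h0 : ℕ} {t : List (ℤ × ℕ)} (hv : EValid h0 t) {x : ℤ}
    (hx0 : 0 ≤ x) (hx1 : x ≤ (t.length : ℤ)) :
    ∃ l : ℤ, ∃ k : ℕ, 1 ≤ k ∧ minL t ≤ l ∧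
      columnYs (raw h0 t) x = Finset.Ico l (l + k) := by
  induction t with
  | nil =>
      simp only [List.length_nil] at hx1
      have hx : x = 0 := le_antisymm hx1 hx0
      subst hx
      exact ⟨0, h0, hv, le_refl _, by
        have := columnYs_raw_last (h0 := h0) ([] : List (ℤ × ℕ)); simpa [lastL, lastH] using this⟩
  | cons c t ih =>
      obtain ⟨d, h⟩ := c
      obtain ⟨hvt, hh, hd1, hd2⟩ := hv
      by_cases hle : x ≤ (t.length : ℤ)
      · obtain ⟨l, k, hk, hml, hcol⟩ := ih hvt hle
        exact ⟨l, k, hk, le_trans (min_le_right _ _) hml, by rw [columnYs_raw_cons hle]; exact hcol⟩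
      · have hx : x = (t.length : ℤ) + 1 := by
          simp only [List.length_cons] at hx1; push_cast at hx1; omega
        subst hx
        refine ⟨lastL t + d, h, hh, min_le_left _ _, ?_⟩
        have := columnYs_raw_last (h0 := h0) ((d, h) :: t)
        simp only [List.length_cons, lastL, lastH] at this
        rw [show ((t.length : ℤ) + 1) = ((t.length + 1 : ℕ) : ℤ) by push_cast; ring]
        exact this

lemma columnYs_raw_nonempty {h0 : ℕ} {t : List (ℤ × ℕ)} (hv : EValid h0 t) {x : ℤ} :
    (columnYs (raw h0 t) x).Nonempty ↔ 0 ≤ x ∧ x ≤ (t.length : ℤ) := by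
  constructor
  · intro hne
    by_contra hc
    rw [columnYs_raw_out (by omega)] at hne
    exact Finset.not_nonempty_empty hne
  · rintro ⟨h1, h2⟩
    obtain ⟨l, k, hk, -, hcol⟩ := columnYs_raw_int hv h1 h2
    rw [hcol]
    exact ⟨l, by simp; omega⟩

lemma card_raw {h0 : ℕ} {t : List (ℤ × ℕ)} : (raw h0 t).card = areaE h0 t := by
  induction t with
  | nil => simp [raw, areaE, card_colF]
  | cons c t ih =>
      obtain ⟨d, h⟩ := c
      simp only [raw]
      rw [Finset.card_union_of_disjoint, ih, card_colF]
      · simp only [areaE, List.map_cons, List.sum_cons]; omega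
      · rw [Finset.disjoint_left]
        rintro ⟨cx, cy⟩ hc hc2
        have h1 : cy ∈ columnYs (raw h0 t) cx := mem_columnYs.2 hc
        have h2 : cy ∈ columnYs (colF ((t.length : ℤ) + 1) (lastL t + d) h) cx :=
          mem_columnYs.2 hc2
        rw [columnYs_colF] at h2
        by_cases hx : cx = (t.length : ℤ) + 1
        · rw [columnYs_raw_out (Or.inr (by omega))] at h1; simp at h1
        · rw [if_neg hx] at h2; simp at h2

lemma numComponents_Ico {a b : ℤ} (hab : a < b) : numComponents (Finset.Ico a b) = 1 := by
  unfold numComponents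
  have : (Finset.Ico a b).filter (fun y => y - 1 ∉ Finset.Ico a b) = {a} := by
    ext y
    simp only [Finset.mem_filter, Finset.mem_Ico, Finset.mem_singleton]
    constructor
    · rintro ⟨⟨h1, h2⟩, h3⟩; by_contra hy; exact h3 ⟨by omega, by omega⟩
    · rintro rfl
      refine ⟨⟨le_refl _, hab⟩, ?_⟩
      simp only [Finset.mem_Ico, not_and, not_lt]
      omega
  rw [this, Finset.card_singleton]

/-- A set with one component is an interval: anything between two members is a member. -/
lemma interval_of_numComponents_one {s : Finset ℤ} (h1 : numComponents s = 1)
    {a b : ℤ} (ha : a ∈ s) (hb : b ∈ s) : ∀ c : ℤ, a ≤ c → c ≤ b → c ∈ s := by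
  intro c hac hcb
  by_contra hc
  have hcb' : c < b := lt_of_le_of_ne hcb (fun h => hc (h ▸ hb))
  have hne : (s.filter (fun y => c < y)).Nonempty := ⟨b, Finset.mem_filter.2 ⟨hb, hcb'⟩⟩
  obtain ⟨z, hzmem, hzmin⟩ : ∃ z ∈ s.filter (fun y => c < y),
      ∀ w ∈ s.filter (fun y => c < y), z ≤ w :=
    ⟨_, Finset.min'_mem _ hne, fun w hw => Finset.min'_le _ w hw⟩
  rw [Finset.mem_filter] at hzmem
  have hz1 : z - 1 ∉ s := by
    intro hmem
    by_cases hcz : c < z - 1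
    · have := hzmin (z - 1) (Finset.mem_filter.2 ⟨hmem, hcz⟩); omega
    · have hzc : z - 1 = c := by omega
      rw [hzc] at hmem; exact hc hmem
  have hsne : s.Nonempty := ⟨a, ha⟩
  obtain ⟨m, hmmem, hmmin⟩ : ∃ m ∈ s, ∀ w ∈ s, m ≤ w :=
    ⟨_, Finset.min'_mem _ hsne, fun w hw => Finset.min'_le _ w hw⟩
  have hm : m ∈ s.filter (fun y => y - 1 ∉ s) :=
    Finset.mem_filter.2 ⟨hmmem, fun hmem => absurd (hmmin _ hmem) (by omega)⟩
  have hzf : z ∈ s.filter (fun y => y - 1 ∉ s) := Finset.mem_filter.2 ⟨hzmem.1, hz1⟩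
  have hma : m ≤ a := hmmin a ha
  have hmz : m ≠ z := by omega
  have hcard : 1 < (s.filter (fun y => y - 1 ∉ s)).card :=
    Finset.one_lt_card.2 ⟨_, hm, _, hzf, hmz⟩
  unfold numComponents at h1
  omega

end CCAux
namespace CCAux

lemma hexAdj_iff {a b : Cell} : HexAdj a b ↔
    (b.1 - a.1 = 1 ∧ b.2 - a.2 = 0) ∨ (b.1 - a.1 = -1 ∧ b.2 - a.2 = 0) ∨
    (b.1 - a.1 = 0 ∧ b.2 - a.2 = 1) ∨ (b.1 - a.1 = 0 ∧ b.2 - a.2 = -1) ∨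
    (b.1 - a.1 = 1 ∧ b.2 - a.2 = 1) ∨ (b.1 - a.1 = -1 ∧ b.2 - a.2 = -1) := by
  simp [HexAdj, Prod.ext_iff]

/-- The step relation of a polyomino. -/
def Stp (P : Finset Cell) (u v : Cell) : Prop := u ∈ P ∧ v ∈ P ∧ HexAdj u v

lemma stp_symm {P : Finset Cell} : Symmetric (Stp P) := by
  rintro u v ⟨h1, h2, h3⟩
  refine ⟨h2, h1, ?_⟩
  rw [hexAdj_iff] at h3 ⊢
  omega

lemma rtg_symm {P : Finset Cell} {a b : Cell}
    (h : Relation.ReflTransGen (Stp P) a b) : Relation.ReflTransGen (Stp P) b a :=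
  by
    induction h with
    | refl => exact Relation.ReflTransGen.refl
    | tail _ hst ih => exact Relation.ReflTransGen.head (stp_symm hst) ih

/-- connect within one column (given as an Icc interval) -/
lemma vert_conn {P : Finset Cell} {x l r : ℤ} (hcol : columnYs P x = Finset.Icc l r) :
    ∀ n : ℕ, ∀ y y' : ℤ, y ∈ columnYs P x → y' ∈ columnYs P x → y ≤ y' → y' - y = n →
      Relation.ReflTransGen (Stp P) (x, y) (x, y') := by
  intro n
  induction n with
  | zero => intro y y' _ _ _ hn; have : y = y' := by omega
            subst this; exact Relation.ReflTransGen.refl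
  | succ m ih =>
      intro y y' hy hy' hle hn
      have hy1 : y + 1 ∈ columnYs P x := by
        rw [hcol] at hy hy' ⊢
        simp only [Finset.mem_Icc] at *
        omega
      have hstep : Stp P (x, y) (x, y + 1) :=
        ⟨mem_columnYs.1 hy, mem_columnYs.1 hy1, by rw [hexAdj_iff]; norm_num⟩
      exact Relation.ReflTransGen.head hstep
        (ih (y + 1) y' hy1 hy' (by omega) (by omega))

lemma vert_conn' {P : Finset Cell} {x l r : ℤ} (hcol : columnYs P x = Finset.Icc l r)
    {y y' : ℤ} (hy : y ∈ columnYs P x) (hy' : y' ∈ columnYs P x) :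
    Relation.ReflTransGen (Stp P) (x, y) (x, y') := by
  rcases le_total y y' with h | h
  · exact vert_conn hcol (y' - y).toNat y y' hy hy' h (by omega)
  · exact rtg_symm (vert_conn hcol (y - y').toNat y' y hy' hy h (by omega))

/-- Structural connectivity: if the columns of `P` are exactly nonempty intervals on
`[0,k)` and consecutive columns are attached, `P` is connected. -/
lemma conn_of_cols {P : Finset Cell} {k : ℕ}
    (Hiv : ∀ x : ℤ, 0 ≤ x → x < (k : ℤ) → ∃ l r : ℤ, l ≤ r ∧ columnYs P x = Finset.Icc l r)
    (Hemp : ∀ x : ℤ, x < 0 ∨ (k : ℤ) ≤ x → columnYs P x = ∅)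
    (Hat : ∀ x : ℤ, 0 ≤ x → x + 1 < (k : ℤ) → ∃ y y' : ℤ,
      y ∈ columnYs P x ∧ y' ∈ columnYs P (x + 1) ∧ (y' = y ∨ y' = y + 1)) :
    ∀ a ∈ P, ∀ b ∈ P, Relation.ReflTransGen (Stp P) a b := by
  have hrange : ∀ c ∈ P, 0 ≤ c.1 ∧ c.1 < (k : ℤ) := by
    intro c hc
    by_contra h
    have he : columnYs P c.1 = ∅ := Hemp c.1 (by omega)
    have : c.2 ∈ columnYs P c.1 := mem_columnYs.2 (by simpa using hc)
    rw [he] at this; simp at this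
  intro a ha b hb
  have hk : 0 < (k : ℤ) := by have := hrange a ha; omega
  obtain ⟨l0, r0, hl0, hcol0⟩ := Hiv 0 le_rfl hk
  have ha0 : l0 ∈ columnYs P 0 := by rw [hcol0]; simp [hl0]
  have reach : ∀ n : ℕ, ∀ x : ℤ, x = (n : ℤ) → x < (k : ℤ) →
      ∀ y ∈ columnYs P x, Relation.ReflTransGen (Stp P) (0, l0) (x, y) := by
    intro n
    induction n with
    | zero =>
        intro x hx hxk y hy
        subst hx
        exact vert_conn' hcol0 ha0 hy
    | succ m ih =>
        intro x hx hxk y hy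
        have hx1 : 0 ≤ x - 1 := by omega
        obtain ⟨y1, y2, hy1, hy2, hadj⟩ := Hat (x - 1) hx1 (by omega)
        have hxx : x - 1 + 1 = x := by ring
        rw [hxx] at hy2
        have h1 : Relation.ReflTransGen (Stp P) (0, l0) (x - 1, y1) :=
          ih (x - 1) (by omega) (by omega) y1 hy1
        have hstep : Stp P (x - 1, y1) (x, y2) := by
          refine ⟨mem_columnYs.1 hy1, mem_columnYs.1 hy2, ?_⟩
          rw [hexAdj_iff]
          simp only
          omega
        obtain ⟨l, r, hlr, hcol⟩ := Hiv x (by omega) hxk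
        exact (h1.tail hstep).trans (vert_conn' hcol hy2 hy)
  have conn : ∀ c ∈ P, Relation.ReflTransGen (Stp P) (0, l0) c := by
    intro c hc
    have hr := hrange c hc
    have : c = (c.1, c.2) := rfl
    rw [this]
    exact reach c.1.toNat c.1 (by omega) hr.2 c.2 (mem_columnYs.2 (by simpa using hc))
  exact (rtg_symm (conn a ha)).trans (conn b hb)

end CCAux
namespace CCAux

lemma Ico_eq_Icc_int {a b : ℤ} : Finset.Ico a b = Finset.Icc a (b - 1) := by
  ext y; simp only [Finset.mem_Ico, Finset.mem_Icc]; omega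

lemma mem_colF {x l : ℤ} {h : ℕ} {c : Cell} :
    c ∈ colF x l h ↔ c.1 = x ∧ l ≤ c.2 ∧ c.2 < l + h := by
  obtain ⟨cx, cy⟩ := c
  simp only [colF, Finset.mem_product, Finset.mem_singleton, Finset.mem_Ico, and_assoc]

lemma one_le_lastH {h0 : ℕ} {t : List (ℤ × ℕ)} (hv : EValid h0 t) : 1 ≤ lastH h0 t := by
  cases t with
  | nil => exact hv
  | cons c t => obtain ⟨d, h⟩ := c; exact hv.2.1

lemma raw_att {h0 : ℕ} {t : List (ℤ × ℕ)} (hv : EValid h0 t) :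
    ∀ x : ℤ, 0 ≤ x → x + 1 ≤ (t.length : ℤ) → ∃ y y' : ℤ,
      y ∈ columnYs (raw h0 t) x ∧ y' ∈ columnYs (raw h0 t) (x + 1) ∧ (y' = y ∨ y' = y + 1) := by
  induction t with
  | nil => intro x h1 h2; simp at h2; omega
  | cons c t ih =>
      obtain ⟨d, h⟩ := c
      obtain ⟨hvt, hh, hd1, hd2⟩ := hv
      intro x h1 h2
      simp only [List.length_cons] at h2
      by_cases hle : x + 1 ≤ (t.length : ℤ)
      · obtain ⟨y, y', hy, hy', hadj⟩ := ih hvt x h1 hle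
        exact ⟨y, y', by rwa [columnYs_raw_cons (by omega)],
          by rwa [columnYs_raw_cons (by omega)], hadj⟩
      · have hx : x = (t.length : ℤ) := by push_cast at h2; omega
        subst hx
        have hcold : columnYs (raw h0 ((d, h) :: t)) (t.length : ℤ) =
            Finset.Ico (lastL t) (lastL t + lastH h0 t) := by
          rw [columnYs_raw_cons (le_refl _), columnYs_raw_last]
        have hcnew : columnYs (raw h0 ((d, h) :: t)) ((t.length : ℤ) + 1) =
            Finset.Ico (lastL t + d) (lastL t + d + h) := by
          have := columnYs_raw_last (h0 := h0) ((d, h) :: t)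
          simp only [List.length_cons, lastL, lastH] at this
          rw [show ((t.length : ℤ) + 1) = ((t.length + 1 : ℕ) : ℤ) by push_cast; ring]
          exact this
        have hlastH : 1 ≤ lastH h0 t := one_le_lastH hvt
        by_cases hd : 1 ≤ d
        · refine ⟨lastL t + d - 1, lastL t + d, ?_, ?_, by omega⟩
          · rw [hcold]; simp only [Finset.mem_Ico]; omega
          · rw [hcnew]; simp only [Finset.mem_Ico]; omega
        · refine ⟨lastL t, lastL t, ?_, ?_, by omega⟩
          · rw [hcold]; simp only [Finset.mem_Ico]; omega
          · rw [hcnew]; simp only [Finset.mem_Ico]; omega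

lemma columnYs_raw_Icc {h0 : ℕ} {t : List (ℤ × ℕ)} (hv : EValid h0 t) {x : ℤ}
    (hx0 : 0 ≤ x) (hx1 : x ≤ (t.length : ℤ)) :
    ∃ l r : ℤ, l ≤ r ∧ columnYs (raw h0 t) x = Finset.Icc l r := by
  obtain ⟨l, k, hk, -, hcol⟩ := columnYs_raw_int hv hx0 hx1
  refine ⟨l, l + k - 1, by omega, ?_⟩
  rw [hcol, Ico_eq_Icc_int]

lemma isPolyomino_raw {h0 : ℕ} {t : List (ℤ × ℕ)} (hv : EValid h0 t) :
    IsPolyomino (raw h0 t) := by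
  constructor
  · have := columnYs_raw_nonempty hv (x := 0)
    obtain ⟨y, hy⟩ := this.2 ⟨le_refl _, by positivity⟩
    exact ⟨(0, y), mem_columnYs.1 hy⟩
  · have := conn_of_cols (P := raw h0 t) (k := t.length + 1)
      (fun x hx0 hx1 => columnYs_raw_Icc hv hx0 (by push_cast at hx1 ⊢; omega))
      (fun x hx => columnYs_raw_out (by push_cast at hx ⊢; omega))
      (fun x hx0 hx1 => raw_att hv x hx0 (by push_cast at hx1 ⊢; omega))
    exact this

lemma columnConvex_decode {h0 : ℕ} {t : List (ℤ × ℕ)} (hv : EValid h0 t) :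
    ColumnConvex (decode h0 t) := by
  intro x hne
  rw [decode, columnYs_trY] at hne ⊢
  have hne' : (columnYs (raw h0 t) x).Nonempty := by
    obtain ⟨y, hy⟩ := hne
    obtain ⟨z, hz, -⟩ := Finset.mem_image.1 hy
    exact ⟨z, hz⟩
  rw [columnYs_raw_nonempty hv] at hne'
  obtain ⟨l, k, hk, -, hcol⟩ := columnYs_raw_int hv hne'.1 hne'.2
  rw [hcol]
  have : (Finset.Ico l (l + k)).image (fun y => y + -minL t) =
      Finset.Ico (l + -minL t) (l + k + -minL t) := by
    ext y
    simp only [Finset.mem_image, Finset.mem_Ico]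
    constructor
    · rintro ⟨z, hz, rfl⟩; omega
    · intro ⟨h1, h2⟩; exact ⟨y + minL t, by omega, by ring⟩
  rw [this]
  exact numComponents_Ico (by omega)

lemma isPolyomino_trY {a : ℤ} {P : Finset Cell} (hP : IsPolyomino P) :
    IsPolyomino (trY a P) := by
  obtain ⟨⟨c, hc⟩, hconn⟩ := hP
  constructor
  · exact ⟨(c.1, c.2 + a), Finset.mem_image.2 ⟨c, hc, rfl⟩⟩
  · intro u hu v hv
    have hu' := mem_trY.1 hu
    have hv' := mem_trY.1 hv
    have h := hconn _ hu' _ hv'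
    have lift : ∀ p q : Cell, Relation.ReflTransGen (Stp P) p q →
        Relation.ReflTransGen (Stp (trY a P)) (p.1, p.2 + a) (q.1, q.2 + a) := by
      intro p q hpq
      induction hpq with
      | refl => exact Relation.ReflTransGen.refl
      | tail _ hst ih =>
          refine ih.tail ⟨mem_trY.2 (by simpa using hst.1), mem_trY.2 (by simpa using hst.2.1), ?_⟩
          have := hst.2.2
          rw [hexAdj_iff] at this ⊢
          simp only at this ⊢
          omega
    have := lift _ _ h
    simp only at this
    have e1 : ((u.1, u.2 - a).1, (u.1, u.2 - a).2 + a) = u := by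
      simp
    have e2 : ((v.1, v.2 - a).1, (v.1, v.2 - a).2 + a) = v := by
      simp
    rw [e1, e2] at this
    exact this

lemma card_trY {a : ℤ} {P : Finset Cell} : (trY a P).card = P.card := by
  rw [trY, Finset.card_image_of_injective]
  intro u v huv
  simp only [Prod.mk.injEq] at huv
  exact Prod.ext huv.1 (by omega)

lemma raw_y_lb {h0 : ℕ} {t : List (ℤ × ℕ)} : ∀ c ∈ raw h0 t, minL t ≤ c.2 := by
  induction t with
  | nil =>
      rintro ⟨cx, cy⟩ hc
      rw [raw, mem_colF] at hc
      simpa [minL] using hc.2.1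
  | cons c t ih =>
      obtain ⟨d, h⟩ := c
      rintro ⟨cx, cy⟩ hc
      simp only [raw, Finset.mem_union] at hc
      rcases hc with hc | hc
      · have := ih _ hc; simp only [minL]; omega
      · rw [mem_colF] at hc
        simp only [minL]
        simp only at hc
        omega

lemma minL_attained {h0 : ℕ} {t : List (ℤ × ℕ)} (hv : EValid h0 t) :
    ∃ c ∈ raw h0 t, c.2 = minL t := by
  induction t with
  | nil =>
      refine ⟨(0, 0), ?_, rfl⟩
      show (0, 0) ∈ colF 0 0 h0
      rw [mem_colF]
      refine ⟨rfl, le_refl _, ?_⟩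
      have : 1 ≤ h0 := hv
      simp only
      omega
  | cons c t ih =>
      obtain ⟨d, h⟩ := c
      obtain ⟨hvt, hh, hd1, hd2⟩ := hv
      by_cases hle : lastL t + d ≤ minL t
      · refine ⟨((t.length : ℤ) + 1, lastL t + d), ?_, ?_⟩
        · simp only [raw, Finset.mem_union]
          right
          rw [mem_colF]
          exact ⟨rfl, le_refl _, by simp only; omega⟩
        · simp only [minL]; omega
      · obtain ⟨c, hc, hcy⟩ := ih hvt
        refine ⟨c, by simp only [raw, Finset.mem_union]; left; exact hc, ?_⟩
        simp only [minL]; omega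

lemma normalized_decode {h0 : ℕ} {t : List (ℤ × ℕ)} (hv : EValid h0 t) :
    Normalized (decode h0 t) := by
  refine ⟨?_, ?_, ?_⟩
  · rintro ⟨cx, cy⟩ hc
    have hc' := mem_trY.1 hc
    constructor
    · have : (cy - -minL t) ∈ columnYs (raw h0 t) cx := mem_columnYs.2 hc'
      have hne : (columnYs (raw h0 t) cx).Nonempty := ⟨_, this⟩
      exact ((columnYs_raw_nonempty hv).1 hne).1
    · have := raw_y_lb _ hc'
      simp only at this
      omega
  · have := (columnYs_raw_nonempty hv (x := 0)).2 ⟨le_refl _, by positivity⟩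
    obtain ⟨y, hy⟩ := this
    exact ⟨(0, y + -minL t), mem_trY.2 (by simpa using mem_columnYs.1 hy), rfl⟩
  · obtain ⟨c, hc, hcy⟩ := minL_attained hv
    refine ⟨(c.1, c.2 + -minL t), Finset.mem_image.2 ⟨c, hc, rfl⟩, by simp [hcy]⟩

lemma card_decode {h0 : ℕ} {t : List (ℤ × ℕ)} : (decode h0 t).card = areaE h0 t := by
  rw [decode, card_trY, card_raw]

end CCAux
set_option maxHeartbeats 1000000

namespace CCAux

lemma col_between {P : Finset Cell} {a b : Cell} (ha : a ∈ P)
    (h : Relation.ReflTransGen (Stp P) a b) :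
    ∀ x : ℤ, a.1 ≤ x → x ≤ b.1 → (columnYs P x).Nonempty := by
  induction h with
  | refl =>
      intro x h1 h2
      have hx : x = a.1 := le_antisymm h2 h1
      subst hx
      exact ⟨a.2, mem_columnYs.2 (by simpa using ha)⟩
  | @tail c b hac hst ih =>
      intro x h1 h2
      by_cases hxc : x ≤ c.1
      · exact ih x h1 hxc
      · have hadj := hst.2.2
        rw [hexAdj_iff] at hadj
        have : x = b.1 := by omega
        subst this
        exact ⟨b.2, mem_columnYs.2 (by simpa using hst.2.1)⟩

lemma adj_step {P : Finset Cell} {a b : Cell}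
    (h : Relation.ReflTransGen (Stp P) a b) :
    ∀ x : ℤ, a.1 ≤ x → x < b.1 → ∃ u v : Cell, u ∈ P ∧ v ∈ P ∧ u.1 = x ∧ v.1 = x + 1 ∧
      (v.2 = u.2 ∨ v.2 = u.2 + 1) := by
  induction h with
  | refl => intro x h1 h2; omega
  | @tail c b hac hst ih =>
      intro x h1 h2
      by_cases hxc : x < c.1
      · exact ih x h1 hxc
      · have hadj := hst.2.2
        rw [hexAdj_iff] at hadj
        have hcx : c.1 = x := by omega
        have hbx : b.1 = x + 1 := by omega
        exact ⟨c, b, hst.1, hst.2.1, hcx, hbx, by omega⟩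

lemma support_interval {P : Finset Cell} (hpoly : IsPolyomino P) (hnorm : Normalized P) :
    ∃ k : ℕ, ∀ x : ℤ, ((columnYs P x).Nonempty ↔ 0 ≤ x ∧ x < (k : ℤ)) := by
  obtain ⟨hge, ⟨c0, hc0, hc0x⟩, -⟩ := hnorm
  have hXne : (P.image Prod.fst).Nonempty := ⟨c0.1, Finset.mem_image_of_mem _ hc0⟩
  set M := (P.image Prod.fst).max' hXne with hM
  have hM0 : 0 ≤ M := by
    have := Finset.le_max' _ c0.1 (Finset.mem_image_of_mem _ hc0)
    omega
  obtain ⟨cM', hcM'⟩ := Finset.mem_image.1 ((P.image Prod.fst).max'_mem hXne)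
  refine ⟨M.toNat + 1, fun x => ⟨?_, ?_⟩⟩
  · rintro ⟨y, hy⟩
    have hmem := mem_columnYs.1 hy
    have h0 := (hge _ hmem).1
    have hle : x ≤ M := Finset.le_max' _ x (Finset.mem_image.2 ⟨(x, y), hmem, rfl⟩)
    constructor
    · exact h0
    · push_cast; omega
  · rintro ⟨h1, h2⟩
    by_cases hxle : x ≤ c0.1
    · have : x = 0 := by omega
      subst this
      rw [← hc0x]
      exact ⟨c0.2, mem_columnYs.2 (by simpa using hc0)⟩
    · have hpath := hpoly.2 c0 hc0 cM' hcM'.1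
      have : x ≤ cM'.1 := by rw [hcM'.2]; push_cast at h2; omega
      exact col_between hc0 hpath x (by omega) this

lemma col_eq_Icc {s : Finset ℤ} (hne : s.Nonempty) (h1 : numComponents s = 1) :
    s = Finset.Icc (s.min' hne) (s.max' hne) := by
  ext y
  simp only [Finset.mem_Icc]
  constructor
  · intro hy; exact ⟨Finset.min'_le _ _ hy, Finset.le_max' _ _ hy⟩
  · rintro ⟨hy1, hy2⟩
    exact interval_of_numComponents_one h1 (s.min'_mem hne) (s.max'_mem hne) y hy1 hy2

lemma trY_union {a : ℤ} {P Q : Finset Cell} : trY a (P ∪ Q) = trY a P ∪ trY a Q :=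
  Finset.image_union _ _

lemma trY_colF {a x l : ℤ} {h : ℕ} : trY a (colF x l h) = colF x (l + a) h := by
  ext c
  rw [mem_trY, mem_colF, mem_colF]
  omega

lemma encode_exists : ∀ k : ℕ, ∀ P : Finset Cell, IsPolyomino P → ColumnConvex P →
    (∀ x : ℤ, (columnYs P x).Nonempty ↔ 0 ≤ x ∧ x < (k : ℤ)) →
    ∃ h0 t ty, EValid h0 t ∧ t.length + 1 = k ∧ P = trY ty (raw h0 t) := by
  intro k
  induction k with
  | zero =>
      intro P hpoly _ hsupp
      obtain ⟨c, hc⟩ := hpoly.1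
      have := (hsupp c.1).1 ⟨c.2, mem_columnYs.2 (by simpa using hc)⟩
      push_cast at this; omega
  | succ m ih =>
      intro P hpoly hcc hsupp
      by_cases hm : m = 0
      · -- single column
        subst hm
        have hne : (columnYs P 0).Nonempty := (hsupp 0).2 ⟨le_refl _, by norm_num⟩
        set s := columnYs P 0 with hs
        have hIcc := col_eq_Icc hne (hcc 0 hne)
        set l := s.min' hne
        set r := s.max' hne
        have hlr : l ≤ r := Finset.min'_le _ _ (s.max'_mem hne)
        refine ⟨(r - l + 1).toNat, [], l, by simp [EValid]; omega, by simp, ?_⟩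
        ext c
        rw [mem_trY]
        show c ∈ P ↔ (c.1, c.2 - l) ∈ raw _ []
        rw [raw, mem_colF]
        constructor
        · intro hc
          have hx : c.1 = 0 := by
            have := (hsupp c.1).1 ⟨c.2, mem_columnYs.2 (by simpa using hc)⟩
            omega
          have hy : c.2 ∈ s := by rw [hs, ← hx]; exact mem_columnYs.2 (by simpa using hc)
          rw [hIcc] at hy
          simp only [Finset.mem_Icc] at hy
          refine ⟨hx, by simp; omega, ?_⟩
          simp only
          rw [Int.toNat_of_nonneg (by omega)]
          omega
        · rintro ⟨hx, hy1, hy2⟩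
          simp only at hx hy1 hy2
          rw [Int.toNat_of_nonneg (by omega)] at hy2
          have : c.2 ∈ s := by rw [hIcc]; simp only [Finset.mem_Icc]; omega
          have := mem_columnYs.1 (hs ▸ this)
          rw [← hx] at this
          simpa using this
      · -- at least two columns
        have hm1 : 1 ≤ m := by omega
        set P' := P.filter (fun c => c.1 < (m : ℤ)) with hP'
        have hcolP' : ∀ x : ℤ, columnYs P' x = if x < (m : ℤ) then columnYs P x else ∅ := by
          intro x
          ext y
          rw [mem_columnYs, hP', Finset.mem_filter]
          split_ifs with hx
          · rw [mem_columnYs]; simp only; tauto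
          · simp only [Finset.notMem_empty, iff_false, not_and]
            intro _; simpa using hx
        have hsupp' : ∀ x : ℤ, (columnYs P' x).Nonempty ↔ 0 ≤ x ∧ x < (m : ℤ) := by
          intro x
          rw [hcolP']
          split_ifs with hx
          · rw [hsupp x]
            constructor
            · rintro ⟨h1, -⟩; exact ⟨h1, hx⟩
            · rintro ⟨h1, h2⟩; refine ⟨h1, by push_cast; omega⟩
          · simp only [Finset.not_nonempty_empty, false_iff, not_and]
            intro _; omega
        -- columns of P are Icc intervals
        have hIccP : ∀ x : ℤ, 0 ≤ x → x < ((m : ℤ) + 1) → ∃ l r : ℤ, l ≤ r ∧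
            columnYs P x = Finset.Icc l r := by
          intro x h1 h2
          have hne : (columnYs P x).Nonempty := (hsupp x).2 ⟨h1, by push_cast; omega⟩
          refine ⟨_, _, ?_, col_eq_Icc hne (hcc x hne)⟩
          exact Finset.min'_le _ _ ((columnYs P x).max'_mem hne)
        -- attachment of consecutive columns of P
        have hatP : ∀ x : ℤ, 0 ≤ x → x + 1 < (m : ℤ) + 1 → ∃ u v : Cell,
            u ∈ P ∧ v ∈ P ∧ u.1 = x ∧ v.1 = x + 1 ∧ (v.2 = u.2 ∨ v.2 = u.2 + 1) := by
          intro x h1 h2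
          obtain ⟨y, hy⟩ := (hsupp x).2 ⟨h1, by push_cast; omega⟩
          obtain ⟨y', hy'⟩ := (hsupp (x + 1)).2 ⟨by omega, by push_cast; omega⟩
          have hpath := hpoly.2 (x, y) (mem_columnYs.1 hy) (x + 1, y') (mem_columnYs.1 hy')
          exact adj_step hpath x (le_refl _) (by norm_num)
        have hpoly' : IsPolyomino P' := by
          constructor
          · obtain ⟨y, hy⟩ := (hsupp' 0).2 ⟨le_refl _, by push_cast; omega⟩
            exact ⟨(0, y), mem_columnYs.1 hy⟩
          · refine conn_of_cols (k := m) ?_ ?_ ?_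
            · intro x h1 h2
              obtain ⟨l, r, hlr, hc⟩ := hIccP x h1 (by omega)
              refine ⟨l, r, hlr, ?_⟩
              rw [hcolP', if_pos h2, hc]
            · intro x hx
              rw [hcolP']
              split_ifs with h
              · rcases hx with hx | hx
                · by_contra hc
                  have := (hsupp x).1 (Finset.nonempty_iff_ne_empty.2 hc)
                  omega
                · omega
              · rfl
            · intro x h1 h2
              obtain ⟨u, v, hu, hv, hux, hvx, hadj⟩ := hatP x h1 (by omega)
              refine ⟨u.2, v.2, ?_, ?_, hadj⟩
              · rw [hcolP', if_pos (by omega)]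
                exact mem_columnYs.2 (by rw [← hux]; simpa using hu)
              · rw [hcolP', if_pos h2]
                exact mem_columnYs.2 (by rw [← hvx]; simpa using hv)
        have hcc' : ColumnConvex P' := by
          intro x hne
          have hx : x < (m : ℤ) := by
            by_contra hc
            rw [hcolP', if_neg hc] at hne
            exact Finset.not_nonempty_empty hne
          rw [hcolP', if_pos hx] at hne ⊢
          exact hcc x hne
        obtain ⟨h0, t, ty, hv, hlen, hPeq⟩ := ih P' hpoly' hcc' hsupp'
        -- the last column of P
        have hneL : (columnYs P (m : ℤ)).Nonempty := (hsupp _).2 ⟨by positivity, by push_cast; omega⟩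
        set s := columnYs P (m : ℤ) with hsdef
        have hIccL := col_eq_Icc hneL (hcc _ hneL)
        set l := s.min' hneL with hldef
        set r := s.max' hneL with hrdef
        have hlr : l ≤ r := Finset.min'_le _ _ (s.max'_mem hneL)
        -- the previous column, described via the encoding
        have hprev : columnYs P ((m : ℤ) - 1) =
            Finset.Ico (lastL t + ty) (lastL t + lastH h0 t + ty) := by
          have h1 : columnYs P' ((m : ℤ) - 1) = columnYs P ((m : ℤ) - 1) := by
            rw [hcolP', if_pos (by omega)]
          rw [← h1, hPeq, columnYs_trY]
          have hlen' : ((m : ℤ) - 1) = (t.length : ℤ) := by push_cast at hlen ⊢; omega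
          rw [hlen', columnYs_raw_last]
          ext y
          simp only [Finset.mem_image, Finset.mem_Ico]
          constructor
          · rintro ⟨z, hz, rfl⟩; omega
          · intro ⟨hy1, hy2⟩; exact ⟨y - ty, by omega, by ring⟩
        -- attachment between columns m-1 and m
        obtain ⟨u, v, hu2, hv2, hux, hvx, hadj⟩ := hatP ((m : ℤ) - 1) (by omega) (by omega)
        have huy : u.2 ∈ columnYs P ((m : ℤ) - 1) := mem_columnYs.2 (by rw [← hux]; simpa using hu2)
        have hvy : v.2 ∈ s := by
          rw [hsdef]
          have : (m : ℤ) - 1 + 1 = (m : ℤ) := by ring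
          rw [← this]
          exact mem_columnYs.2 (by rw [← hvx]; simpa using hv2)
        rw [hprev] at huy
        simp only [Finset.mem_Ico] at huy
        rw [hIccL] at hvy
        simp only [Finset.mem_Icc] at hvy
        -- construct the new encoding
        set h : ℕ := (r - l + 1).toNat with hhdef
        set d : ℤ := l - lastL t - ty with hddef
        have hhval : (h : ℤ) = r - l + 1 := Int.toNat_of_nonneg (by omega)
        refine ⟨h0, (d, h) :: t, ty, ?_, by simp [hlen], ?_⟩
        · refine ⟨hv, by omega, by omega, by omega⟩
        · rw [raw, trY_union, ← hPeq, trY_colF]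
          have hcolFeq : colF ((t.length : ℤ) + 1) (lastL t + d + ty) h =
              ({(m : ℤ)} : Finset ℤ) ×ˢ Finset.Icc l r := by
            have e1 : (t.length : ℤ) + 1 = (m : ℤ) := by push_cast at hlen ⊢; omega
            have e2 : lastL t + d + ty = l := by omega
            have e3 : Finset.Ico l (l + (h : ℤ)) = Finset.Icc l r := by
              rw [Ico_eq_Icc_int]
              have : l + (h : ℤ) - 1 = r := by omega
              rw [this]
            simp only [colF]
            rw [e1, e2, e3]
          rw [hcolFeq]
          ext c
          simp only [Finset.mem_union, hP', Finset.mem_filter, Finset.mem_product,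
            Finset.mem_singleton, Finset.mem_Icc]
          constructor
          · intro hc
            have hcx : 0 ≤ c.1 ∧ c.1 < (m : ℤ) + 1 := by
              have := (hsupp c.1).1 ⟨c.2, mem_columnYs.2 (by simpa using hc)⟩
              push_cast at this; exact this
            by_cases hlt : c.1 < (m : ℤ)
            · left; exact ⟨hc, hlt⟩
            · right
              have hcm : c.1 = (m : ℤ) := by omega
              have : c.2 ∈ s := by rw [hsdef, ← hcm]; exact mem_columnYs.2 (by simpa using hc)
              rw [hIccL] at this
              simp only [Finset.mem_Icc] at this
              exact ⟨hcm, this⟩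
          · rintro (⟨hc, -⟩ | ⟨hcm, hy1, hy2⟩)
            · exact hc
            · have : c.2 ∈ s := by rw [hIccL]; simp only [Finset.mem_Icc]; omega
              have := mem_columnYs.1 (hsdef ▸ this)
              rw [← hcm] at this
              simpa using this

end CCAux
namespace CCAux

lemma raw_cell_support {h0 : ℕ} {t : List (ℤ × ℕ)} {c : Cell} (hc : c ∈ raw h0 t) :
    0 ≤ c.1 ∧ c.1 ≤ (t.length : ℤ) := by
  by_contra h
  have he : columnYs (raw h0 t) c.1 = ∅ := columnYs_raw_out (by omega)
  have : c.2 ∈ columnYs (raw h0 t) c.1 := mem_columnYs.2 (by simpa using hc)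
  rw [he] at this; simp at this

lemma Ico_inj {a a' : ℤ} {h h' : ℕ} (hh : 1 ≤ h)
    (heq : Finset.Ico a (a + (h : ℤ)) = Finset.Ico a' (a' + (h' : ℤ))) :
    a = a' ∧ h = h' := by
  have H := fun y => Finset.ext_iff.1 heq y
  simp only [Finset.mem_Ico] at H
  have h1 := H a
  have h2 := H a'
  have h3 := H (a + h - 1)
  have h4 := H (a' + h' - 1)
  omega

lemma image_Ico_add {a l b : ℤ} :
    (Finset.Ico l b).image (fun y => y + a) = Finset.Ico (l + a) (b + a) := by
  ext y
  simp only [Finset.mem_image, Finset.mem_Ico]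
  constructor
  · rintro ⟨z, hz, rfl⟩; omega
  · intro h; exact ⟨y - a, by omega, by ring⟩

lemma columnYs_raw_zero {h0 : ℕ} {t : List (ℤ × ℕ)} :
    columnYs (raw h0 t) 0 = Finset.Ico 0 (h0 : ℤ) := by
  induction t with
  | nil =>
      have := columnYs_raw_last (h0 := h0) ([] : List (ℤ × ℕ))
      simpa [lastL, lastH] using this
  | cons c t ih =>
      obtain ⟨d, h⟩ := c
      rw [columnYs_raw_cons (by positivity)]
      exact ih

lemma trY_inj {a : ℤ} {P Q : Finset Cell} (h : trY a P = trY a Q) : P = Q := by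
  ext c
  have : c ∈ P ↔ (c.1, c.2 + a) ∈ trY a P := by
    rw [mem_trY]; simp
  rw [this, h, mem_trY]
  simp

lemma raw_inj : ∀ t t' : List (ℤ × ℕ), ∀ h0 h0' : ℕ, EValid h0 t → EValid h0' t' →
    raw h0 t = raw h0' t' → h0 = h0' ∧ t = t' := by
  intro t
  induction t with
  | nil =>
      intro t' h0 h0' hv hv' heq
      have hlen : t'.length = 0 := by
        have h1 := (columnYs_raw_nonempty hv' (x := (t'.length : ℤ))).2
          ⟨by positivity, le_refl _⟩
        rw [← heq, columnYs_raw_nonempty hv] at h1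
        simp only [List.length_nil, Nat.cast_zero] at h1
        omega
      obtain rfl : t' = [] := List.length_eq_zero_iff.1 hlen
      have hcard : (raw h0 ([] : List (ℤ × ℕ))).card = (raw h0' ([] : List (ℤ × ℕ))).card := by
        rw [heq]
      rw [card_raw, card_raw] at hcard
      simp only [areaE, List.map_nil, List.sum_nil] at hcard
      exact ⟨by omega, rfl⟩
  | cons c t ih =>
      obtain ⟨d, h⟩ := c
      intro t' h0 h0' hv hv' heq
      have hlen : t'.length = t.length + 1 := by
        have h1 := (columnYs_raw_nonempty hv (x := (((d, h) :: t).length : ℤ))).2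
          ⟨by positivity, le_refl _⟩
        rw [heq, columnYs_raw_nonempty hv'] at h1
        have h2 := (columnYs_raw_nonempty hv' (x := (t'.length : ℤ))).2
          ⟨by positivity, le_refl _⟩
        rw [← heq, columnYs_raw_nonempty hv] at h2
        simp only [List.length_cons] at *
        omega
      obtain ⟨c', t'', rfl⟩ : ∃ c' t'', t' = c' :: t'' := by
        cases t' with
        | nil => simp at hlen
        | cons a b => exact ⟨a, b, rfl⟩
      obtain ⟨d', h'⟩ := c'
      have hlen2 : t''.length = t.length := by simpa using hlen
      obtain ⟨hvt, hh, hd1, hd2⟩ := hv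
      obtain ⟨hvt', hh', hd1', hd2'⟩ := hv'
      -- last columns agree
      have hlast : Finset.Ico (lastL t + d) (lastL t + d + (h : ℤ)) =
          Finset.Ico (lastL t'' + d') (lastL t'' + d' + (h' : ℤ)) := by
        have e1 := columnYs_raw_last (h0 := h0) ((d, h) :: t)
        have e2 := columnYs_raw_last (h0 := h0') ((d', h') :: t'')
        simp only [lastL, lastH, List.length_cons] at e1 e2
        rw [heq] at e1
        rw [show ((t.length + 1 : ℕ) : ℤ) = ((t''.length + 1 : ℕ) : ℤ) by push_cast; omega] at e1
        rw [e2] at e1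
        exact e1.symm
      obtain ⟨hbot, hht⟩ := Ico_inj hh hlast
      -- the initial parts agree
      have hrest : raw h0 t = raw h0' t'' := by
        ext c
        have char : ∀ (g0 : ℕ) (dd : ℤ) (hh0 : ℕ) (tt : List (ℤ × ℕ)),
            c ∈ raw g0 tt ↔ c ∈ raw g0 ((dd, hh0) :: tt) ∧ c.1 ≤ (tt.length : ℤ) := by
          intro g0 dd hh0 tt
          constructor
          · intro hc
            exact ⟨by rw [raw]; exact Finset.mem_union_left _ hc, (raw_cell_support hc).2⟩
          · rintro ⟨hc, hle⟩
            rw [raw, Finset.mem_union] at hc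
            rcases hc with hc | hc
            · exact hc
            · rw [mem_colF] at hc
              omega
        rw [char h0 d h t, char h0' d' h' t'', heq, hlen2]
      obtain ⟨rfl, rfl⟩ := ih t'' h0 h0' hvt hvt' hrest
      refine ⟨rfl, by rw [show d = d' by omega, show h = h' from hht]⟩

lemma decode_inj {h0 h0' : ℕ} {t t' : List (ℤ × ℕ)} (hv : EValid h0 t) (hv' : EValid h0' t')
    (heq : decode h0 t = decode h0' t') : h0 = h0' ∧ t = t' := by
  have hcol0 : Finset.Ico (-minL t) (-minL t + (h0 : ℤ)) =
      Finset.Ico (-minL t') (-minL t' + (h0' : ℤ)) := by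
    have e1 : columnYs (decode h0 t) 0 = Finset.Ico (-minL t) (-minL t + (h0 : ℤ)) := by
      rw [decode, columnYs_trY, columnYs_raw_zero, image_Ico_add]
      ring_nf
    have e2 : columnYs (decode h0' t') 0 = Finset.Ico (-minL t') (-minL t' + (h0' : ℤ)) := by
      rw [decode, columnYs_trY, columnYs_raw_zero, image_Ico_add]
      ring_nf
    rw [← e1, ← e2, heq]
  have one_le_first : ∀ (tt : List (ℤ × ℕ)) (g : ℕ), EValid g tt → 1 ≤ g := by
    intro tt
    induction tt with
    | nil => intro g hg; exact hg
    | cons c tl ihh => intro g hg; obtain ⟨dd, hh⟩ := c; exact ihh g hg.1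
  have hh0 : 1 ≤ h0 := one_le_first t h0 hv
  obtain ⟨hmin, hh00⟩ := Ico_inj hh0 hcol0
  have hmin' : minL t = minL t' := by omega
  have hraw : raw h0 t = raw h0' t' := by
    apply trY_inj (a := -minL t)
    have : decode h0' t' = trY (-minL t) (raw h0' t') := by rw [decode, hmin']
    rw [← this, ← heq, decode]
  exact raw_inj t t' h0 h0' hv hv' hraw

end CCAux
namespace CCAux

lemma one_le_h0 : ∀ (t : List (ℤ × ℕ)) (g : ℕ), EValid g t → 1 ≤ g := by
  intro t
  induction t with
  | nil => intro g hg; exact hg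
  | cons c tl ih => intro g hg; obtain ⟨dd, hh⟩ := c; exact ih g hg.1

lemma one_le_areaE {h0 : ℕ} {t : List (ℤ × ℕ)} (hv : EValid h0 t) : 1 ≤ areaE h0 t := by
  have := one_le_h0 t h0 hv
  simp only [areaE]
  omega

/-- All valid encodings of total area `n`, built recursively by peeling the last column. -/
def TargetF : ℕ → Finset (ℕ × List (ℤ × ℕ))
  | 0 => ∅
  | (n + 1) => insert (n + 1, ([] : List (ℤ × ℕ)))
      ((Finset.range n).attach.biUnion (fun h =>
        (TargetF (n - h.val)).biUnion (fun e' =>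
          (Finset.range (lastH e'.1 e'.2 + (h.val + 1))).image
            (fun (j : ℕ) => (e'.1, ((1 : ℤ) - ((h.val : ℤ) + 1) + (j : ℤ), h.val + 1) :: e'.2)))))
  termination_by n => n
  decreasing_by omega

/-- the `h`-indexed piece of the decomposition -/
def PieceF (n : ℕ) (h : ℕ) : Finset (ℕ × List (ℤ × ℕ)) :=
  (TargetF (n - h)).biUnion (fun e' =>
    (Finset.range (lastH e'.1 e'.2 + (h + 1))).image
      (fun (j : ℕ) => (e'.1, ((1 : ℤ) - ((h : ℤ) + 1) + (j : ℤ), h + 1) :: e'.2)))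

lemma TargetF_succ (n : ℕ) : TargetF (n + 1) =
    insert (n + 1, ([] : List (ℤ × ℕ)))
      ((Finset.range n).attach.biUnion (fun h => PieceF n h.val)) := by
  rw [TargetF]
  rfl

lemma mem_PieceF {n h : ℕ} {e : ℕ × List (ℤ × ℕ)} : e ∈ PieceF n h ↔
    ∃ e' ∈ TargetF (n - h), ∃ j : ℕ, j < lastH e'.1 e'.2 + (h + 1) ∧
      e = (e'.1, ((1 : ℤ) - ((h : ℤ) + 1) + (j : ℤ), h + 1) :: e'.2) := by
  simp only [PieceF, Finset.mem_biUnion, Finset.mem_image, Finset.mem_range]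
  constructor
  · rintro ⟨e', he', j, hj, rfl⟩; exact ⟨e', he', j, hj, rfl⟩
  · rintro ⟨e', he', j, hj, rfl⟩; exact ⟨e', he', j, hj, rfl⟩

lemma mem_TargetF : ∀ n : ℕ, ∀ e : ℕ × List (ℤ × ℕ),
    e ∈ TargetF n ↔ EValid e.1 e.2 ∧ areaE e.1 e.2 = n := by
  intro n
  induction n using Nat.strong_induction_on with
  | _ n ih =>
    match n with
    | 0 =>
        intro e
        rw [TargetF]
        simp only [Finset.notMem_empty, false_iff, not_and]
        intro hv
        have := one_le_areaE hv
        omega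
    | (n + 1) =>
        intro e
        rw [TargetF_succ]
        simp only [Finset.mem_insert, Finset.mem_biUnion, Finset.mem_attach, true_and,
          Subtype.exists, Finset.mem_range]
        constructor
        · rintro (rfl | ⟨h, hh, hmem⟩)
          · exact ⟨by exact Nat.le_add_left 1 n, by simp [areaE]⟩
          · obtain ⟨e', he', j, hj, rfl⟩ := mem_PieceF.1 hmem
            obtain ⟨hv', ha'⟩ := (ih (n - h) (by omega) e').1 he'
            have hnh : n - h + (h + 1) = n + 1 := by
              have := one_le_areaE hv'
              omega
            refine ⟨⟨hv', by omega, by push_cast; omega, by push_cast; omega⟩, ?_⟩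
            simp only [areaE, List.map_cons, List.sum_cons] at ha' ⊢
            omega
        · rintro ⟨hv, ha⟩
          obtain ⟨e1, e2⟩ := e
          match e2 with
          | [] =>
              left
              simp only [areaE, List.map_nil, List.sum_nil, Nat.add_zero] at ha
              simp [ha]
          | (d, h') :: t =>
              right
              dsimp only at hv ha ⊢
              obtain ⟨hvt, hh', hd1, hd2⟩ := hv
              have harea' : areaE e1 t = n + 1 - h' := by
                simp only [areaE, List.map_cons, List.sum_cons] at ha ⊢
                omega
              have h1area : 1 ≤ areaE e1 t := one_le_areaE hvt
              have hh'n : h' ≤ n := by omega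
              refine ⟨h' - 1, by omega, ?_⟩
              rw [mem_PieceF]
              refine ⟨(e1, t), ?_, (d - (1 - (h' : ℤ))).toNat, ?_, ?_⟩
              · rw [ih (n - (h' - 1)) (by omega) (e1, t)]
                refine ⟨hvt, ?_⟩
                dsimp only
                omega
              · simp only
                have hlh := one_le_lastH hvt
                omega
              · have hh'' : h' - 1 + 1 = h' := by omega
                rw [hh'']
                dsimp only
                simp only [Prod.mk.injEq, List.cons.injEq, true_and, and_true]
                omega

end CCAux
namespace CCAux

def AF (n : ℕ) : ℕ := (TargetF n).card
def BF (n : ℕ) : ℕ := ∑ e ∈ TargetF n, lastH e.1 e.2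

lemma head_PieceF {n h : ℕ} {e : ℕ × List (ℤ × ℕ)} (he : e ∈ PieceF n h) :
    ∃ d t, e.2 = (d, h + 1) :: t := by
  obtain ⟨e', -, j, -, rfl⟩ := mem_PieceF.1 he
  exact ⟨_, _, rfl⟩

lemma piece_card {n h : ℕ} : (PieceF n h).card = BF (n - h) + (h + 1) * AF (n - h) := by
  rw [PieceF, Finset.card_biUnion]
  · have : ∀ e' ∈ TargetF (n - h),
        ((Finset.range (lastH e'.1 e'.2 + (h + 1))).image
          (fun (j : ℕ) => (e'.1, ((1 : ℤ) - ((h : ℤ) + 1) + (j : ℤ), h + 1) :: e'.2))).card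
        = lastH e'.1 e'.2 + (h + 1) := by
      intro e' _
      rw [Finset.card_image_of_injective, Finset.card_range]
      intro j1 j2 hj
      simp only [Prod.mk.injEq, List.cons.injEq] at hj
      omega
    rw [Finset.sum_congr rfl this, Finset.sum_add_distrib, Finset.sum_const, smul_eq_mul]
    rw [BF, AF, mul_comm]
  · intro e1 h1 e2 h2 hne
    rw [Function.onFun, Finset.disjoint_left]
    rintro e he1 he2
    simp only [Finset.mem_image, Finset.mem_range] at he1 he2
    obtain ⟨j1, -, rfl⟩ := he1
    obtain ⟨j2, -, hj⟩ := he2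
    simp only [Prod.mk.injEq, List.cons.injEq] at hj
    exact hne (Prod.ext hj.1.symm hj.2.2.symm)

lemma piece_sum {n h : ℕ} : ∑ e ∈ PieceF n h, lastH e.1 e.2 =
    (h + 1) * (BF (n - h) + (h + 1) * AF (n - h)) := by
  have : ∀ e ∈ PieceF n h, lastH e.1 e.2 = h + 1 := by
    intro e he
    obtain ⟨d, t, h2⟩ := head_PieceF he
    rw [h2]
    rfl
  rw [Finset.sum_congr rfl this, Finset.sum_const, smul_eq_mul, piece_card, mul_comm]

lemma base_not_mem {n : ℕ} :
    (n + 1, ([] : List (ℤ × ℕ))) ∉ (Finset.range n).attach.biUnion (fun h => PieceF n h.val) := by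
  intro hmem
  obtain ⟨h, -, hP⟩ := Finset.mem_biUnion.1 hmem
  obtain ⟨d, t, ht⟩ := head_PieceF hP
  simp at ht

lemma pieces_disjoint {n : ℕ} : ∀ h1 ∈ (Finset.range n).attach, ∀ h2 ∈ (Finset.range n).attach,
    h1 ≠ h2 → Disjoint (PieceF n h1.val) (PieceF n h2.val) := by
  intro h1 _ h2 _ hne
  rw [Finset.disjoint_left]
  intro e he1 he2
  obtain ⟨d1, t1, e1⟩ := head_PieceF he1
  obtain ⟨d2, t2, e2⟩ := head_PieceF he2
  rw [e1] at e2
  simp only [List.cons.injEq, Prod.mk.injEq] at e2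
  exact hne (Subtype.ext (by omega))

lemma AF_succ (n : ℕ) :
    AF (n + 1) = 1 + ∑ h ∈ Finset.range n, (BF (n - h) + (h + 1) * AF (n - h)) := by
  rw [AF, TargetF_succ, Finset.card_insert_of_notMem base_not_mem,
    Finset.card_biUnion pieces_disjoint]
  rw [Finset.sum_attach (Finset.range n) (fun h => (PieceF n h).card)]
  simp only [piece_card]
  omega

lemma BF_succ (n : ℕ) :
    BF (n + 1) = (n + 1) + ∑ h ∈ Finset.range n, (h + 1) * (BF (n - h) + (h + 1) * AF (n - h)) := by
  rw [BF, TargetF_succ, Finset.sum_insert base_not_mem,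
    Finset.sum_biUnion ?disj]
  case disj =>
    intro h1 hm1 h2 hm2 hne
    exact pieces_disjoint h1 hm1 h2 hm2 hne
  rw [Finset.sum_attach (Finset.range n) (fun h => ∑ e ∈ PieceF n h, lastH e.1 e.2)]
  simp only [piece_sum]
  have h1 : lastH (n + 1, ([] : List (ℤ × ℕ))).1 (n + 1, ([] : List (ℤ × ℕ))).2 = n + 1 := rfl
  have h2 : lastH (n + 1) ([] : List (ℤ × ℕ)) = n + 1 := rfl
  omega

end CCAux
namespace CCAux

def SZ (n : ℕ) : ℤ := ∑ m ∈ Finset.range n, (AF (m + 1) : ℤ)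

def TZ (n : ℕ) : ℤ :=
  ∑ m ∈ Finset.range (n + 1), ((BF (m + 1) : ℤ) + (2 * (((n : ℤ) + 1) - m) - 1) * (AF (m + 1) : ℤ))

lemma L1 (n : ℕ) : (AF (n + 1) : ℤ) =
    1 + ∑ m ∈ Finset.range n, ((BF (m + 1) : ℤ) + ((n : ℤ) - m) * (AF (m + 1) : ℤ)) := by
  have h := AF_succ n
  have hc : (AF (n + 1) : ℤ) =
      1 + ∑ h ∈ Finset.range n, ((BF (n - h) : ℤ) + ((h : ℤ) + 1) * (AF (n - h) : ℤ)) := by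
    rw [h]
    push_cast
    ring
  rw [hc]
  congr 1
  rw [← Finset.sum_range_reflect (fun m => (BF (m + 1) : ℤ) + ((n : ℤ) - m) * (AF (m + 1) : ℤ)) n]
  apply Finset.sum_congr rfl
  intro h hh
  rw [Finset.mem_range] at hh
  have e1 : n - 1 - h + 1 = n - h := by omega
  have e2 : ((n : ℤ) - ((n - 1 - h : ℕ) : ℤ)) = (h : ℤ) + 1 := by omega
  rw [e1, e2]

lemma L2 (n : ℕ) : (BF (n + 1) : ℤ) = ((n : ℤ) + 1) +
    ∑ m ∈ Finset.range n, (((n : ℤ) - m) * ((BF (m + 1) : ℤ) + ((n : ℤ) - m) * (AF (m + 1) : ℤ))) := by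
  have h := BF_succ n
  have hc : (BF (n + 1) : ℤ) = ((n : ℤ) + 1) +
      ∑ h ∈ Finset.range n, (((h : ℤ) + 1) * ((BF (n - h) : ℤ) + ((h : ℤ) + 1) * (AF (n - h) : ℤ))) := by
    rw [h]
    push_cast
    ring
  rw [hc]
  congr 1
  rw [← Finset.sum_range_reflect
    (fun m => ((n : ℤ) - m) * ((BF (m + 1) : ℤ) + ((n : ℤ) - m) * (AF (m + 1) : ℤ))) n]
  apply Finset.sum_congr rfl
  intro h hh
  rw [Finset.mem_range] at hh
  have e1 : n - 1 - h + 1 = n - h := by omega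
  have e2 : ((n : ℤ) - ((n - 1 - h : ℕ) : ℤ)) = (h : ℤ) + 1 := by omega
  rw [e1, e2]

lemma D1 (n : ℕ) : (AF (n + 2) : ℤ) = AF (n + 1) + BF (n + 1) + SZ (n + 1) := by
  have h1 := L1 (n + 1)
  have h2 := L1 n
  have key : ∑ m ∈ Finset.range (n + 1),
      ((BF (m + 1) : ℤ) + (((n : ℤ) + 1) - m) * (AF (m + 1) : ℤ)) =
      (∑ m ∈ Finset.range n, ((BF (m + 1) : ℤ) + ((n : ℤ) - m) * (AF (m + 1) : ℤ)))
        + (BF (n + 1) : ℤ) + SZ (n + 1) := by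
    have e : ∀ m ∈ Finset.range (n + 1),
        (BF (m + 1) : ℤ) + (((n : ℤ) + 1) - m) * (AF (m + 1) : ℤ) =
        ((BF (m + 1) : ℤ) + ((n : ℤ) - m) * (AF (m + 1) : ℤ)) + (AF (m + 1) : ℤ) := by
      intro m _; ring
    rw [Finset.sum_congr rfl e, Finset.sum_add_distrib]
    rw [Finset.sum_range_succ (fun m => (BF (m + 1) : ℤ) + ((n : ℤ) - m) * (AF (m + 1) : ℤ))]
    simp only [SZ]
    ring
  rw [show n + 2 = (n + 1) + 1 from rfl]
  rw [h1]
  have hs : ∑ m ∈ Finset.range (n + 1),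
      ((BF (m + 1) : ℤ) + (((n + 1 : ℕ) : ℤ) - m) * (AF (m + 1) : ℤ)) =
      ∑ m ∈ Finset.range (n + 1),
      ((BF (m + 1) : ℤ) + (((n : ℤ) + 1) - m) * (AF (m + 1) : ℤ)) := by
    apply Finset.sum_congr rfl
    intro m _
    push_cast
    ring
  rw [hs, key, h2]
  ring

lemma D2 (n : ℕ) : (BF (n + 2) : ℤ) = BF (n + 1) + 1 + TZ n := by
  have h1 := L2 (n + 1)
  have h2 := L2 n
  have key : ∑ m ∈ Finset.range (n + 1),
      ((((n : ℤ) + 1) - m) * ((BF (m + 1) : ℤ) + (((n : ℤ) + 1) - m) * (AF (m + 1) : ℤ))) =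
      (∑ m ∈ Finset.range n, (((n : ℤ) - m) * ((BF (m + 1) : ℤ) + ((n : ℤ) - m) * (AF (m + 1) : ℤ))))
        + TZ n := by
    have e : ∀ m ∈ Finset.range (n + 1),
        (((n : ℤ) + 1) - m) * ((BF (m + 1) : ℤ) + (((n : ℤ) + 1) - m) * (AF (m + 1) : ℤ)) =
        (((n : ℤ) - m) * ((BF (m + 1) : ℤ) + ((n : ℤ) - m) * (AF (m + 1) : ℤ)))
          + ((BF (m + 1) : ℤ) + (2 * (((n : ℤ) + 1) - m) - 1) * (AF (m + 1) : ℤ)) := by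
      intro m _; ring
    rw [Finset.sum_congr rfl e, Finset.sum_add_distrib]
    rw [Finset.sum_range_succ
      (fun m => ((n : ℤ) - m) * ((BF (m + 1) : ℤ) + ((n : ℤ) - m) * (AF (m + 1) : ℤ)))]
    simp only [TZ]
    ring
  rw [show n + 2 = (n + 1) + 1 from rfl]
  rw [h1]
  have hs : ∑ m ∈ Finset.range (n + 1),
      ((((n + 1 : ℕ) : ℤ) - m) * ((BF (m + 1) : ℤ) + (((n + 1 : ℕ) : ℤ) - m) * (AF (m + 1) : ℤ))) =
      ∑ m ∈ Finset.range (n + 1),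
      ((((n : ℤ) + 1) - m) * ((BF (m + 1) : ℤ) + (((n : ℤ) + 1) - m) * (AF (m + 1) : ℤ))) := by
    apply Finset.sum_congr rfl
    intro m _
    push_cast
    ring
  rw [hs, key, h2]
  push_cast
  ring

lemma SZ_succ (n : ℕ) : SZ (n + 1) = SZ n + (AF (n + 1) : ℤ) := by
  rw [SZ, Finset.sum_range_succ, SZ]

lemma TZ_succ (n : ℕ) : TZ (n + 1) = TZ n + (BF (n + 2) : ℤ) + (AF (n + 2) : ℤ) + 2 * SZ (n + 1) := by
  rw [TZ, Finset.sum_range_succ]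
  have e : ∀ m ∈ Finset.range (n + 1),
      (BF (m + 1) : ℤ) + (2 * ((((n + 1 : ℕ) : ℤ) + 1) - m) - 1) * (AF (m + 1) : ℤ) =
      ((BF (m + 1) : ℤ) + (2 * (((n : ℤ) + 1) - m) - 1) * (AF (m + 1) : ℤ)) + 2 * (AF (m + 1) : ℤ) := by
    intro m _
    push_cast
    ring
  rw [Finset.sum_congr rfl e, Finset.sum_add_distrib]
  have elast : (BF (n + 1 + 1) : ℤ) +
      (2 * ((((n + 1 : ℕ) : ℤ) + 1) - ((n + 1 : ℕ) : ℤ)) - 1) * (AF (n + 1 + 1) : ℤ) =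
      (BF (n + 2) : ℤ) + (AF (n + 2) : ℤ) := by
    push_cast
    ring
  rw [elast]
  have esz : ∑ m ∈ Finset.range (n + 1), 2 * (AF (m + 1) : ℤ) = 2 * SZ (n + 1) := by
    rw [SZ, Finset.mul_sum]
  rw [esz, TZ]
  ring

lemma finalrec (n : ℕ) : (AF (n + 5) : ℤ) =
    6 * AF (n + 4) - 10 * AF (n + 3) + 7 * AF (n + 2) - AF (n + 1) := by
  have d1a := D1 n
  have d1b := D1 (n + 1)
  have d1c := D1 (n + 2)
  have d1d := D1 (n + 3)
  have d2a := D2 n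
  have d2b := D2 (n + 1)
  have d2c := D2 (n + 2)
  have t1 := TZ_succ n
  have t2 := TZ_succ (n + 1)
  have s1 := SZ_succ (n + 1)
  have s2 := SZ_succ (n + 2)
  have s3 := SZ_succ (n + 3)
  have e1 : n + 1 + 1 = n + 2 := rfl
  have e2 : n + 2 + 1 = n + 3 := rfl
  have e3 : n + 3 + 1 = n + 4 := rfl
  have e4 : n + 1 + 2 = n + 3 := rfl
  have e5 : n + 2 + 2 = n + 4 := rfl
  have e6 : n + 3 + 2 = n + 5 := rfl
  rw [e1, e4] at d1b d2b
  rw [e2, e5] at d1c d2c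
  rw [e3, e6] at d1d
  rw [e1, e4] at t2
  rw [e1] at s1
  rw [e2] at s2
  rw [e3] at s3
  linarith

end CCAux
namespace CCAux

lemma AF1 : AF 1 = 1 := by
  have := AF_succ 0; simpa using this

lemma BF1 : BF 1 = 1 := by
  have := BF_succ 0; simpa using this

lemma AF2 : AF 2 = 3 := by
  have := AF_succ 1
  norm_num [Finset.sum_range_succ, AF1, BF1] at this
  exact this

lemma BF2 : BF 2 = 4 := by
  have := BF_succ 1
  norm_num [Finset.sum_range_succ, AF1, BF1] at this
  exact this

lemma AF3 : AF 3 = 11 := by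
  have := AF_succ 2
  norm_num [Finset.sum_range_succ, AF1, AF2, BF1, BF2] at this
  exact this

lemma BF3 : BF 3 = 16 := by
  have := BF_succ 2
  norm_num [Finset.sum_range_succ, AF1, AF2, BF1, BF2] at this
  exact this

lemma AF4 : AF 4 = 42 := by
  have := AF_succ 3
  norm_num [Finset.sum_range_succ, AF1, AF2, AF3, BF1, BF2, BF3] at this
  exact this

end CCAux
namespace CCAux

theorem ccCount_eq_AF (n : ℕ) : ccCount n = AF n := by
  rw [ccCount, AF, ← Nat.card_eq_finsetCard]
  refine (Nat.card_eq_of_bijective (fun e : {e // e ∈ TargetF n} =>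
    (⟨decode e.1.1 e.1.2, ?_⟩ :
      {P : Finset Cell // IsPolyomino P ∧ ColumnConvex P ∧ Normalized P ∧ P.card = n})) ?_).symm
  · obtain ⟨hv, harea⟩ := (mem_TargetF n e.1).1 e.2
    refine ⟨isPolyomino_trY (isPolyomino_raw hv), columnConvex_decode hv,
      normalized_decode hv, ?_⟩
    rw [card_decode, harea]
  · constructor
    · rintro ⟨e1, he1⟩ ⟨e2, he2⟩ heq
      simp only [Subtype.mk.injEq] at heq
      obtain ⟨hv1, -⟩ := (mem_TargetF n e1).1 he1
      obtain ⟨hv2, -⟩ := (mem_TargetF n e2).1 he2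
      obtain ⟨h1, h2⟩ := decode_inj hv1 hv2 heq
      exact Subtype.ext (Prod.ext h1 h2)
    · rintro ⟨P, hpoly, hcc, hnorm, hcard⟩
      obtain ⟨k, hsupp⟩ := support_interval hpoly hnorm
      obtain ⟨h0, t, ty, hv, hlen, hPeq⟩ := encode_exists k P hpoly hcc hsupp
      -- identify the translation
      obtain ⟨c0, hc0, hc0y⟩ := minL_attained (h0 := h0) (t := t) hv
      have h1 : (c0.1, c0.2 + ty) ∈ P := by
        rw [hPeq]
        exact Finset.mem_image.2 ⟨c0, hc0, rfl⟩
      have lb : 0 ≤ minL t + ty := by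
        have := (hnorm.1 _ h1).2
        simp only at this
        omega
      obtain ⟨cz, hcz, hczy⟩ := hnorm.2.2
      have h2 : (cz.1, cz.2 - ty) ∈ raw h0 t := by
        have : cz ∈ trY ty (raw h0 t) := hPeq ▸ hcz
        exact mem_trY.1 this
      have ub : minL t + ty ≤ 0 := by
        have := raw_y_lb _ h2
        simp only at this
        omega
      have hty : ty = -minL t := by omega
      have hPdec : P = decode h0 t := by
        rw [decode, ← hty, hPeq]
      have harea : areaE h0 t = n := by
        rw [← hcard, hPdec, card_decode]
      refine ⟨⟨(h0, t), (mem_TargetF n (h0, t)).2 ⟨hv, harea⟩⟩, ?_⟩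
      exact Subtype.ext hPdec.symm

end CCAux

/-- Initial values and linear recurrence for the number of column-convex polyominoes. -/
theorem stmt_1 :
    ccCount 1 = 1 ∧ ccCount 2 = 3 ∧ ccCount 3 = 11 ∧ ccCount 4 = 42 ∧
    ∀ n : ℕ, 5 ≤ n →
      (ccCount n : ℤ) = 6 * (ccCount (n-1) : ℤ) - 10 * (ccCount (n-2) : ℤ)
        + 7 * (ccCount (n-3) : ℤ) - (ccCount (n-4) : ℤ) := by
  refine ⟨?_, ?_, ?_, ?_, ?_⟩
  · rw [CCAux.ccCount_eq_AF]; exact CCAux.AF1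
  · rw [CCAux.ccCount_eq_AF]; exact CCAux.AF2
  · rw [CCAux.ccCount_eq_AF]; exact CCAux.AF3
  · rw [CCAux.ccCount_eq_AF]; exact CCAux.AF4
  · intro n hn
    obtain ⟨m, rfl⟩ : ∃ m, n = m + 5 := ⟨n - 5, by omega⟩
    rw [show m + 5 - 1 = m + 4 by omega, show m + 5 - 2 = m + 3 by omega,
      show m + 5 - 3 = m + 2 by omega, show m + 5 - 4 = m + 1 by omega]
    simp only [CCAux.ccCount_eq_AF]
    exact CCAux.finalrec m
end
end
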